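/- arXiv:1809.10574 — 4 statements merged into one kernel-verified Lean document; each statement's English description precedes it below -/
import Mathlib

section
/- Fix integers m, d ≥ 1 and α ∈ (0,1]. Let X be the set of continuous maps f : ℝ^m → ℝ^d such that [f]_{α,K} < ∞ for every compact set K ⊆ ℝ^m. Then X, endowed with the strong α-Hölder–Whitney topology, is a Baire space. -/
open TopologicalSpace Set
open scoped ENNReal

noncomputable section

/-- Euclidean space `ℝ^n`. -/
abbrev Euc (n : ℕ) : Type := EuclideanSpace ℝ (Fin n)

/-- The `α`-Hölder seminorm of `f` over the set `A`, valued in `[0,∞]`: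
`[f]_{α,A} = sup { ‖f x − f y‖ / ‖x − y‖^α : x, y ∈ A, x ≠ y }`. -/
noncomputable def holderSemi {E F : Type*} [NormedAddCommGroup E] [NormedAddCommGroup F]
    (α : ℝ) (A : Set E) (f : E → F) : ℝ≥0∞ :=
  ⨆ (x) (_ : x ∈ A) (y) (_ : y ∈ A) (_ : x ≠ y),
    ENNReal.ofReal (‖f x - f y‖ / ‖x - y‖ ^ α)

/-- The sup-norm `‖f‖_{C⁰(A)} = sup_{x ∈ A} ‖f x‖`, valued in `[0,∞]`. -/
noncomputable def supNormOn {E F : Type*} [NormedAddCommGroup E] [NormedAddCommGroup F]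
    (A : Set E) (f : E → F) : ℝ≥0∞ :=
  ⨆ (x) (_ : x ∈ A), ENNReal.ofReal ‖f x‖

/-- The `α`-Hölder norm `‖f‖_{α,A} = ‖f‖_{C⁰(A)} + [f]_{α,A}`. -/
noncomputable def holderNorm {E F : Type*} [NormedAddCommGroup E] [NormedAddCommGroup F]
    (α : ℝ) (A : Set E) (f : E → F) : ℝ≥0∞ :=
  supNormOn A f + holderSemi α A f

/-- Continuous maps `ℝ^m → ℝ^d` with finite `α`-Hölder seminorm on every compact set. -/
abbrev HolderMap (m d : ℕ) (α : ℝ) : Type :=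
  {f : Euc m → Euc d // Continuous f ∧
    ∀ K : Set (Euc m), IsCompact K → holderSemi α K f < ⊤}

/-- Generating sets `N_s(f; {K_t}, {ε_t})` of the strong `α`-Hölder–Whitney topology:
indexed by a locally finite family of compact sets `K_t` and extended positive reals `ε_t`. -/
def strongBasic (m d : ℕ) (α : ℝ) : Set (Set (HolderMap m d α)) :=
  { S | ∃ (T : Type) (K : T → Set (Euc m)) (ε : T → ℝ≥0∞) (f : HolderMap m d α),
      (∀ t, IsCompact (K t)) ∧ LocallyFinite K ∧ (∀ t, 0 < ε t) ∧
      S = { g | ∀ t, holderNorm α (K t) (f.1 - g.1) < ε t } }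

/-- Generating sets `N(f; K, ε)` of the weak `α`-Hölder–Whitney topology. -/
def weakBasic (m d : ℕ) (α : ℝ) : Set (Set (HolderMap m d α)) :=
  { S | ∃ (f : HolderMap m d α) (K : Set (Euc m)) (ε : ℝ), IsCompact K ∧ 0 < ε ∧
      S = { g | holderNorm α K (f.1 - g.1) < ENNReal.ofReal ε } }

section Aux

open Filter
open scoped Topology

variable {E F : Type*} [NormedAddCommGroup E] [NormedAddCommGroup F] {α : ℝ} {A B : Set E}

lemma le_supNormOn {f : E → F} {x : E} (hx : x ∈ A) :
    ENNReal.ofReal ‖f x‖ ≤ supNormOn A f :=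
  le_iSup_of_le x (le_iSup_of_le hx le_rfl)

lemma le_holderSemi {f : E → F} {x y : E} (hx : x ∈ A) (hy : y ∈ A) (hxy : x ≠ y) :
    ENNReal.ofReal (‖f x - f y‖ / ‖x - y‖ ^ α) ≤ holderSemi α A f :=
  le_iSup_of_le x <| le_iSup_of_le hx <| le_iSup_of_le y <| le_iSup_of_le hy <|
    le_iSup_of_le hxy le_rfl

lemma supNormOn_le {f : E → F} {C : ℝ≥0∞} (h : ∀ x ∈ A, ENNReal.ofReal ‖f x‖ ≤ C) :
    supNormOn A f ≤ C :=
  iSup_le fun x => iSup_le fun hx => h x hx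

lemma holderSemi_le {f : E → F} {C : ℝ≥0∞}
    (h : ∀ x ∈ A, ∀ y ∈ A, x ≠ y → ENNReal.ofReal (‖f x - f y‖ / ‖x - y‖ ^ α) ≤ C) :
    holderSemi α A f ≤ C :=
  iSup_le fun x => iSup_le fun hx => iSup_le fun y => iSup_le fun hy => iSup_le fun hxy =>
    h x hx y hy hxy

lemma supNormOn_le_holderNorm (f : E → F) : supNormOn A f ≤ holderNorm α A f :=
  self_le_add_right _ _

lemma holderSemi_le_holderNorm (f : E → F) : holderSemi α A f ≤ holderNorm α A f :=
  self_le_add_left _ _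

lemma supNormOn_add_le {f g : E → F} :
    supNormOn A (f + g) ≤ supNormOn A f + supNormOn A g := by
  refine supNormOn_le fun x hx => ?_
  calc ENNReal.ofReal ‖(f + g) x‖ ≤ ENNReal.ofReal (‖f x‖ + ‖g x‖) :=
        ENNReal.ofReal_le_ofReal (norm_add_le _ _)
    _ = ENNReal.ofReal ‖f x‖ + ENNReal.ofReal ‖g x‖ :=
        ENNReal.ofReal_add (norm_nonneg _) (norm_nonneg _)
    _ ≤ _ := add_le_add (le_supNormOn hx) (le_supNormOn hx)

lemma holderSemi_add_le {f g : E → F} :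
    holderSemi α A (f + g) ≤ holderSemi α A f + holderSemi α A g := by
  refine holderSemi_le fun x hx y hy hxy => ?_
  have hc : 0 < ‖x - y‖ ^ α :=
    Real.rpow_pos_of_pos (by rwa [norm_sub_pos_iff]) _
  have h1 : ‖(f + g) x - (f + g) y‖ / ‖x - y‖ ^ α
      ≤ ‖f x - f y‖ / ‖x - y‖ ^ α + ‖g x - g y‖ / ‖x - y‖ ^ α := by
    rw [← add_div, div_le_div_iff_of_pos_right hc]
    calc ‖(f + g) x - (f + g) y‖ = ‖(f x - f y) + (g x - g y)‖ := by
          simp only [Pi.add_apply]; congr 1; abel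
      _ ≤ ‖f x - f y‖ + ‖g x - g y‖ := norm_add_le _ _
  calc ENNReal.ofReal (‖(f + g) x - (f + g) y‖ / ‖x - y‖ ^ α)
      ≤ ENNReal.ofReal (‖f x - f y‖ / ‖x - y‖ ^ α + ‖g x - g y‖ / ‖x - y‖ ^ α) :=
        ENNReal.ofReal_le_ofReal h1
    _ = ENNReal.ofReal (‖f x - f y‖ / ‖x - y‖ ^ α)
        + ENNReal.ofReal (‖g x - g y‖ / ‖x - y‖ ^ α) :=
        ENNReal.ofReal_add (div_nonneg (norm_nonneg _) hc.le) (div_nonneg (norm_nonneg _) hc.le)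
    _ ≤ _ := add_le_add (le_holderSemi hx hy hxy) (le_holderSemi hx hy hxy)

lemma holderNorm_add_le {f g : E → F} :
    holderNorm α A (f + g) ≤ holderNorm α A f + holderNorm α A g := by
  unfold holderNorm
  calc supNormOn A (f + g) + holderSemi α A (f + g)
      ≤ (supNormOn A f + supNormOn A g) + (holderSemi α A f + holderSemi α A g) :=
        add_le_add supNormOn_add_le holderSemi_add_le
    _ = _ := by ring

lemma holderNorm_triangle {f g h : E → F} :
    holderNorm α A (f - h) ≤ holderNorm α A (f - g) + holderNorm α A (g - h) := by
  rw [← sub_add_sub_cancel f g h]; exact holderNorm_add_le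

lemma holderNorm_sub_self (f : E → F) : holderNorm α A (f - f) ≤ 0 := by
  rw [sub_self]
  have h1 : supNormOn A (0 : E → F) ≤ 0 := supNormOn_le fun x hx => by simp
  have h2 : holderSemi α A (0 : E → F) ≤ 0 := holderSemi_le fun x hx y hy hxy => by simp
  exact (add_le_add h1 h2).trans (by simp)

lemma holderSemi_mono_set (hAB : A ⊆ B) (f : E → F) :
    holderSemi α A f ≤ holderSemi α B f :=
  holderSemi_le fun x hx y hy hxy => le_holderSemi (hAB hx) (hAB hy) hxy

lemma holderNorm_mono_set (hAB : A ⊆ B) (f : E → F) :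
    holderNorm α A f ≤ holderNorm α B f :=
  add_le_add (supNormOn_le fun x hx => le_supNormOn (hAB hx)) (holderSemi_mono_set hAB f)

lemma holderNorm_le_double_of_tendsto {f g : E → F} {F' : ℕ → E → F} {C : ℝ≥0∞}
    (hlim : ∀ x, Tendsto (fun k => F' k x) atTop (𝓝 (g x)))
    (hb : ∀ᶠ k in atTop, holderNorm α A (f - F' k) ≤ C) :
    holderNorm α A (f - g) ≤ C + C := by
  refine add_le_add (supNormOn_le fun x hx => ?_) (holderSemi_le fun x hx y hy hxy => ?_)
  · have ht : Tendsto (fun k => ENNReal.ofReal ‖f x - F' k x‖) atTop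
        (𝓝 (ENNReal.ofReal ‖f x - g x‖)) :=
      ENNReal.tendsto_ofReal ((tendsto_const_nhds.sub (hlim x)).norm)
    refine le_of_tendsto ht (hb.mono fun k hk => ?_)
    exact le_trans (le_supNormOn (f := f - F' k) hx) ((supNormOn_le_holderNorm _).trans hk)
  · have ht : Tendsto (fun k => ENNReal.ofReal (‖(f - F' k) x - (f - F' k) y‖ / ‖x - y‖ ^ α))
        atTop (𝓝 (ENNReal.ofReal (‖(f - g) x - (f - g) y‖ / ‖x - y‖ ^ α))) := by
      apply ENNReal.tendsto_ofReal
      apply Tendsto.div_const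
      apply Tendsto.norm
      exact (tendsto_const_nhds.sub (hlim x)).sub (tendsto_const_nhds.sub (hlim y))
    refine le_of_tendsto ht (hb.mono fun k hk => ?_)
    exact le_trans (le_holderSemi (f := f - F' k) hx hy hxy)
      ((holderSemi_le_holderNorm _).trans hk)

lemma ennreal_quarter_add_quarter_lt {ε : ℝ≥0∞} (h0 : 0 < ε) (h1 : ε ≤ 1) :
    ε / 4 + ε / 4 < ε := by
  have hne : ε ≠ ⊤ := (h1.trans_lt (by norm_num)).ne
  have : ε / 4 + ε / 4 = ε / 2 := by
    rw [ENNReal.div_add_div_same]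
    rw [show ε + ε = 2 * ε by ring, show (4 : ℝ≥0∞) = 2 * 2 by norm_num]
    exact ENNReal.mul_div_mul_left _ _ (by norm_num) (by norm_num)
  rw [this]
  exact ENNReal.half_lt_self h0.ne' hne

lemma ennreal_div4_le (a : ℝ≥0∞) : a / 4 ≤ a := by
  rw [ENNReal.div_le_iff_le_mul (by norm_num) (by norm_num)]
  calc a = a * 1 := (mul_one a).symm
    _ ≤ a * 4 := by gcongr; norm_num

end Aux


section Aux2

open Filter
open scoped Topology

variable {m d : ℕ} {α : ℝ}

lemma holderSemi_sub_le {A : Set (Euc m)} {f g : Euc m → Euc d} :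
    holderSemi α A (f - g) ≤ holderSemi α A f + holderSemi α A g := by
  have : f - g = f + (-g) := by rw [sub_eq_add_neg]
  rw [this]
  refine holderSemi_add_le.trans (add_le_add le_rfl (le_of_eq ?_))
  unfold holderSemi
  congr 1; ext x; congr 1; ext hx; congr 1; ext y; congr 1; ext hy; congr 1; ext hxy
  congr 2
  simp [norm_sub_rev (g y) (g x)]
  rw [← norm_neg]
  congr 1; abel

lemma holderNorm_sub_lt_top (f g : HolderMap m d α) {K : Set (Euc m)} (hK : IsCompact K) :
    holderNorm α K (f.1 - g.1) < ⊤ := by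
  obtain ⟨C, hC⟩ := hK.exists_bound_of_continuousOn (f.2.1.sub g.2.1).continuousOn
  have h1 : supNormOn K (f.1 - g.1) ≤ ENNReal.ofReal C :=
    supNormOn_le fun x hx => ENNReal.ofReal_le_ofReal (hC x hx)
  have h2 : holderSemi α K (f.1 - g.1) < ⊤ :=
    lt_of_le_of_lt holderSemi_sub_le
      (ENNReal.add_lt_top.2 ⟨f.2.2 K hK, g.2.2 K hK⟩)
  exact ENNReal.add_lt_top.2 ⟨lt_of_le_of_lt h1 ENNReal.ofReal_lt_top, h2⟩

/-- Recentering: every generated-open set containing `g` contains a basic set centered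
at `g` with finite positive radii. -/
lemma exists_recentered {U : Set (HolderMap m d α)}
    (hU : TopologicalSpace.GenerateOpen (strongBasic m d α) U) :
    ∀ g ∈ U, ∃ (T : Type) (K : T → Set (Euc m)) (ε : T → ℝ≥0∞),
      (∀ t, IsCompact (K t)) ∧ LocallyFinite K ∧ (∀ t, 0 < ε t) ∧ (∀ t, ε t ≤ 1) ∧
      { h : HolderMap m d α | ∀ t, holderNorm α (K t) (g.1 - h.1) < ε t } ⊆ U := by
  induction hU with
  | basic S hS =>
    intro g hg
    obtain ⟨T, K, ε, f, hcpt, hlf, hpos, rfl⟩ := hS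
    refine ⟨T, K, fun t => min (ε t - holderNorm α (K t) (f.1 - g.1)) 1, hcpt, hlf,
      fun t => lt_min (tsub_pos_iff_lt.2 (hg t)) one_pos, fun t => min_le_right _ _, ?_⟩
    intro h hh t
    have ha : holderNorm α (K t) (f.1 - g.1) ≠ ⊤ := ((hg t).trans_le le_top).ne
    calc holderNorm α (K t) (f.1 - h.1)
        ≤ holderNorm α (K t) (f.1 - g.1) + holderNorm α (K t) (g.1 - h.1) :=
          holderNorm_triangle
      _ < holderNorm α (K t) (f.1 - g.1)
          + min (ε t - holderNorm α (K t) (f.1 - g.1)) 1 :=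
          ENNReal.add_lt_add_left ha (hh t)
      _ ≤ holderNorm α (K t) (f.1 - g.1) + (ε t - holderNorm α (K t) (f.1 - g.1)) :=
          add_le_add le_rfl (min_le_left _ _)
      _ = ε t := add_tsub_cancel_of_le (hg t).le
  | univ =>
    intro g _
    exact ⟨Empty, Empty.elim, Empty.elim, fun t => t.elim, locallyFinite_of_finite _,
      fun t => t.elim, fun t => t.elim, fun _ _ => trivial⟩
  | inter U₁ U₂ _ _ ih₁ ih₂ =>
    intro g hg
    obtain ⟨T₁, K₁, ε₁, hcpt₁, hlf₁, hpos₁, hle₁, hsub₁⟩ := ih₁ g hg.1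
    obtain ⟨T₂, K₂, ε₂, hcpt₂, hlf₂, hpos₂, hle₂, hsub₂⟩ := ih₂ g hg.2
    refine ⟨T₁ ⊕ T₂, Sum.elim K₁ K₂, Sum.elim ε₁ ε₂, fun t => ?_, hlf₁.sumElim hlf₂,
      fun t => ?_, fun t => ?_, fun h hh => ⟨hsub₁ fun t => hh (.inl t), hsub₂ fun t => hh (.inr t)⟩⟩
    · cases t with
      | inl t => exact hcpt₁ t
      | inr t => exact hcpt₂ t
    · cases t with
      | inl t => exact hpos₁ t
      | inr t => exact hpos₂ t
    · cases t with
      | inl t => exact hle₁ t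
      | inr t => exact hle₂ t
  | sUnion S _ ih =>
    intro g hg
    obtain ⟨U, hUS, hgU⟩ := hg
    obtain ⟨T, K, ε, h1, h2, h3, h4, h5⟩ := ih U hUS g hgU
    exact ⟨T, K, ε, h1, h2, h3, h4, h5.trans (subset_sUnion_of_mem hUS)⟩

end Aux2



section Stage

open Filter
open scoped Topology

variable {m d : ℕ} {α : ℝ}

structure Stage (m d : ℕ) (α : ℝ) where
  c : HolderMap m d α
  T : Type
  K : T → Set (Euc m)
  ε : T → ℝ≥0∞
  cpt : ∀ t, IsCompact (K t)
  lf : LocallyFinite K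
  pos : ∀ t, 0 < ε t
  le_one : ∀ t, ε t ≤ 1

def Stage.V (s : Stage m d α) : Set (HolderMap m d α) :=
  { h | ∀ t, holderNorm α (s.K t) (s.c.1 - h.1) < s.ε t }

def Stage.D (s : Stage m d α) : Set (HolderMap m d α) :=
  { h | ∀ t, holderNorm α (s.K t) (s.c.1 - h.1) ≤ s.ε t / 4 }

lemma Stage.c_mem_D (s : Stage m d α) : s.c ∈ s.D :=
  fun t => ((holderNorm_sub_self s.c.1).trans zero_le)

lemma exists_next (s : Stage m d α) {U : Set (HolderMap m d α)}
    (hUo : TopologicalSpace.GenerateOpen (strongBasic m d α) U)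
    (hUd : ∀ Q ∈ strongBasic m d α, Q.Nonempty → (U ∩ Q).Nonempty) (r : ℕ) :
    ∃ s' : Stage m d α, s'.D ⊆ s.D ∧ s'.V ⊆ U ∧
      ∀ h ∈ s'.D, holderNorm α (Metric.closedBall 0 (r : ℝ)) (s'.c.1 - h.1)
        ≤ ENNReal.ofReal ((r : ℝ) + 1)⁻¹ := by
  set Q : Set (HolderMap m d α) :=
    { h | ∀ t, holderNorm α (s.K t) (s.c.1 - h.1) < s.ε t / 4 } with hQdef
  have hQbasic : Q ∈ strongBasic m d α :=
    ⟨s.T, s.K, fun t => s.ε t / 4, s.c, s.cpt, s.lf,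
      fun t => ENNReal.div_pos (s.pos t).ne' (by norm_num), rfl⟩
  have hQne : Q.Nonempty :=
    ⟨s.c, fun t => lt_of_le_of_lt (holderNorm_sub_self s.c.1)
      (ENNReal.div_pos (s.pos t).ne' (by norm_num))⟩
  obtain ⟨c', hc'U, hc'Q⟩ := hUd Q hQbasic hQne
  obtain ⟨T', K', ε', hcpt', hlf', hpos', hle1', hsub'⟩ := exists_recentered hUo c' hc'U
  refine ⟨⟨c', s.T ⊕ (T' ⊕ Unit),
      Sum.elim s.K (Sum.elim K' fun _ => Metric.closedBall 0 (r : ℝ)),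
      Sum.elim (fun t => min (s.ε t / 4 - holderNorm α (s.K t) (s.c.1 - c'.1)) 1)
        (Sum.elim ε' fun _ => ENNReal.ofReal ((r : ℝ) + 1)⁻¹),
      ?_, ?_, ?_, ?_⟩, ?_, ?_, ?_⟩
  · rintro (t | t | t)
    · exact s.cpt t
    · exact hcpt' t
    · exact isCompact_closedBall _ _
  · exact s.lf.sumElim (hlf'.sumElim (locallyFinite_of_finite _))
  · rintro (t | t | t)
    · exact lt_min (tsub_pos_iff_lt.2 (hc'Q t)) one_pos
    · exact hpos' t
    · exact ENNReal.ofReal_pos.2 (by positivity)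
  · rintro (t | t | t)
    · exact min_le_right _ _
    · exact hle1' t
    · exact ENNReal.ofReal_le_one.2 (by
        rw [inv_le_one_iff₀]; right; linarith [Nat.cast_nonneg (α := ℝ) r])
  · -- D inclusion
    intro h hh t
    have ha : holderNorm α (s.K t) (s.c.1 - c'.1) ≠ ⊤ := ((hc'Q t).trans_le le_top).ne
    have hht := hh (Sum.inl t)
    simp only [Sum.elim_inl] at hht
    calc holderNorm α (s.K t) (s.c.1 - h.1)
        ≤ holderNorm α (s.K t) (s.c.1 - c'.1) + holderNorm α (s.K t) (c'.1 - h.1) :=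
          holderNorm_triangle
      _ ≤ holderNorm α (s.K t) (s.c.1 - c'.1)
          + (s.ε t / 4 - holderNorm α (s.K t) (s.c.1 - c'.1)) := by
          refine add_le_add le_rfl (hht.trans ?_)
          exact (ennreal_div4_le _).trans (min_le_left _ _)
      _ = s.ε t / 4 := add_tsub_cancel_of_le (hc'Q t).le
  · -- V ⊆ U
    intro h hh
    refine hsub' fun t => ?_
    have := hh (Sum.inr (Sum.inl t))
    simpa using this
  · -- ball bound
    intro h hh
    have := hh (Sum.inr (Sum.inr ()))
    simp only [Sum.elim_inr] at this
    exact this.trans (ennreal_div4_le _)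

end Stage

section Main

open Filter Metric
open scoped Topology

/-- the space of continuous maps `ℝ^m → ℝ^d` with locally finite `α`-Hölder
seminorm, endowed with the strong `α`-Hölder–Whitney topology, is a Baire space. -/
theorem statement0 (m d : ℕ) (hm : 1 ≤ m) (hd : 1 ≤ d) (α : ℝ) (hα : α ∈ Set.Ioc (0:ℝ) 1) :
    @BaireSpace (HolderMap m d α) (generateFrom (strongBasic m d α)) := by
  letI τ : TopologicalSpace (HolderMap m d α) :=
    TopologicalSpace.generateFrom (strongBasic m d α)
  refine ⟨fun Uo hUo hUd => ?_⟩
  rw [dense_iff_inter_open]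
  intro U hUopen hUne
  have hUgen : TopologicalSpace.GenerateOpen (strongBasic m d α) U := hUopen
  have hUogen : ∀ n, TopologicalSpace.GenerateOpen (strongBasic m d α) (Uo n) := fun n => hUo n
  have hUd' : ∀ n, ∀ Q ∈ strongBasic m d α, Q.Nonempty → (Uo n ∩ Q).Nonempty := by
    intro n Q hQ hQne
    have := (hUd n).inter_open_nonempty Q
      (TopologicalSpace.isOpen_generateFrom_of_mem hQ) hQne
    exact this.imp fun x hx => ⟨hx.2, hx.1⟩
  obtain ⟨g₀, hg₀⟩ := hUne
  obtain ⟨T₀, K₀, ε₀, hcpt₀, hlf₀, hpos₀, hle₀, hsub₀⟩ := exists_recentered hUgen g₀ hg₀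
  set s₀ : Stage m d α := ⟨g₀, T₀, K₀, ε₀, hcpt₀, hlf₀, hpos₀, hle₀⟩ with hs₀
  have hV₀ : s₀.V ⊆ U := hsub₀
  have step : ∀ (n : ℕ) (s : Stage m d α), ∃ s' : Stage m d α, s'.D ⊆ s.D ∧ s'.V ⊆ Uo n ∧
      ∀ h ∈ s'.D, holderNorm α (closedBall 0 (((n+1 : ℕ)) : ℝ)) (s'.c.1 - h.1)
        ≤ ENNReal.ofReal ((((n+1:ℕ)) : ℝ) + 1)⁻¹ :=
    fun n s => exists_next s (hUogen n) (hUd' n) (n+1)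
  choose F hFD hFV hFB using step
  set S : ℕ → Stage m d α := fun n => Nat.rec s₀ F n with hS
  have hD : ∀ n, (S (n+1)).D ⊆ (S n).D := fun n => hFD n (S n)
  have hV : ∀ n, (S (n+1)).V ⊆ Uo n := fun n => hFV n (S n)
  have hB : ∀ n, ∀ h ∈ (S (n+1)).D,
      holderNorm α (closedBall 0 (((n+1:ℕ)):ℝ)) ((S (n+1)).c.1 - h.1)
        ≤ ENNReal.ofReal ((((n+1:ℕ)):ℝ)+1)⁻¹ := fun n => hFB n (S n)
  have hchain : ∀ n k, n ≤ k → (S k).D ⊆ (S n).D := by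
    intro n k hnk
    induction k, hnk using Nat.le_induction with
    | base => exact subset_rfl
    | succ k hk ih => exact (hD k).trans ih
  have hcmem : ∀ n k, n ≤ k → (S k).c ∈ (S n).D := fun n k h => hchain n k h (S k).c_mem_D
  -- real-valued sup bounds
  have hreal : ∀ (p k : ℕ), p + 1 ≤ k → ∀ x : Euc m, ‖x‖ ≤ ((p:ℝ)+1) →
      ‖(S (p+1)).c.1 x - (S k).c.1 x‖ ≤ ((p:ℝ)+2)⁻¹ := by
    intro p k hk x hx
    have h1 := hB p _ (hcmem (p+1) k hk)
    have hxmem : x ∈ closedBall (0 : Euc m) (((p+1:ℕ)):ℝ) := by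
      simp only [mem_closedBall, dist_zero_right]
      push_cast; linarith
    have h2 : ENNReal.ofReal ‖((S (p+1)).c.1 - (S k).c.1) x‖
        ≤ ENNReal.ofReal ((((p+1:ℕ)):ℝ)+1)⁻¹ :=
      (le_supNormOn hxmem).trans ((supNormOn_le_holderNorm _).trans h1)
    have h3 := (ENNReal.ofReal_le_ofReal_iff (by positivity)).1 h2
    have : (((p+1:ℕ)):ℝ) + 1 = (p:ℝ)+2 := by push_cast; ring
    rw [this] at h3
    simpa using h3
  -- Cauchy, limit
  have hcauchy : ∀ x : Euc m, ∃ L : Euc d, Tendsto (fun k => (S k).c.1 x) atTop (𝓝 L) := by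
    intro x
    apply cauchySeq_tendsto_of_complete
    rw [Metric.cauchySeq_iff']
    intro ε hε
    set p := max ⌈‖x‖⌉₊ ⌈ε⁻¹⌉₊ with hp
    have hxp : ‖x‖ ≤ (p:ℝ)+1 := by
      have := Nat.le_ceil ‖x‖
      have h2 : (⌈‖x‖⌉₊ : ℝ) ≤ (p:ℝ) := by exact_mod_cast Nat.cast_le.2 (le_max_left _ _)
      linarith
    have hεp : ((p:ℝ)+2)⁻¹ < ε := by
      have h1 := Nat.le_ceil ε⁻¹
      have h2 : (⌈ε⁻¹⌉₊ : ℝ) ≤ (p:ℝ) := by exact_mod_cast Nat.cast_le.2 (le_max_right _ _)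
      have h3 : ε⁻¹ < (p:ℝ)+2 := by linarith
      have h4 : (0:ℝ) < (p:ℝ)+2 := by positivity
      exact (inv_lt_comm₀ h4 hε).2 h3
    refine ⟨p+1, fun n hn => ?_⟩
    have := hreal p n hn x hxp
    calc dist ((S n).c.1 x) ((S (p+1)).c.1 x)
        = ‖(S (p+1)).c.1 x - (S n).c.1 x‖ := by rw [dist_comm, dist_eq_norm]
      _ ≤ ((p:ℝ)+2)⁻¹ := this
      _ < ε := hεp
  choose gfun hgfun using hcauchy
  -- limit bounds at Hölder-norm level
  have hlimb : ∀ p : ℕ, holderNorm α (closedBall 0 (((p+1:ℕ)):ℝ)) ((S (p+1)).c.1 - gfun)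
      ≤ ENNReal.ofReal ((((p+1:ℕ)):ℝ)+1)⁻¹ + ENNReal.ofReal ((((p+1:ℕ)):ℝ)+1)⁻¹ := by
    intro p
    refine holderNorm_le_double_of_tendsto (fun x => hgfun x) ?_
    filter_upwards [eventually_ge_atTop (p+1)] with k hk
    exact hB p _ (hcmem (p+1) k hk)
  -- real-valued limit bound
  have hrealg : ∀ (p : ℕ), ∀ x : Euc m, ‖x‖ ≤ ((p:ℝ)+1) →
      ‖(S (p+1)).c.1 x - gfun x‖ ≤ ((p:ℝ)+2)⁻¹ := by
    intro p x hx
    have ht : Tendsto (fun k => ‖(S (p+1)).c.1 x - (S k).c.1 x‖) atTop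
        (𝓝 ‖(S (p+1)).c.1 x - gfun x‖) := (tendsto_const_nhds.sub (hgfun x)).norm
    refine le_of_tendsto ht ?_
    filter_upwards [eventually_ge_atTop (p+1)] with k hk
    exact hreal p k hk x hx
  -- continuity of the limit
  have gcont : Continuous gfun := by
    rw [continuous_iff_continuousAt]
    intro x₀
    set p₀ := ⌈‖x₀‖⌉₊ with hp₀
    have hx₀ : ‖x₀‖ < ((p₀:ℝ)+1) := (Nat.le_ceil _).trans_lt (by linarith)
    have hcont : ContinuousOn gfun (closedBall 0 ((p₀:ℝ)+1)) := by
      refine TendstoUniformlyOn.continuousOn (F := fun k x => (S k).c.1 x)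
        (p := atTop) ?_ (Eventually.of_forall fun k => ((S k).c.2.1).continuousOn).frequently
      rw [Metric.tendstoUniformlyOn_iff]
      intro ε hε
      set q := max p₀ ⌈2*ε⁻¹⌉₊ with hq
      have hq₀ : (p₀:ℝ) ≤ (q:ℝ) := by exact_mod_cast Nat.cast_le.2 (le_max_left _ _)
      have hεq : ((q:ℝ)+2)⁻¹ + ((q:ℝ)+2)⁻¹ < ε := by
        have h1 := Nat.le_ceil (2*ε⁻¹)
        have h2 : (⌈2*ε⁻¹⌉₊ : ℝ) ≤ (q:ℝ) := by exact_mod_cast Nat.cast_le.2 (le_max_right _ _)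
        have h3 : 2*ε⁻¹ < (q:ℝ)+2 := by linarith
        have h4 : (0:ℝ) < (q:ℝ)+2 := by positivity
        have h5 : ((q:ℝ)+2)⁻¹ < (2*ε⁻¹)⁻¹ := by
          apply inv_strictAnti₀ ?_ h3
          positivity
        have h6 : (2*ε⁻¹)⁻¹ = ε/2 := by field_simp
        rw [h6] at h5
        linarith
      filter_upwards [eventually_ge_atTop (q+1)] with k hk
      intro x hx
      have hxq : ‖x‖ ≤ (q:ℝ)+1 := by
        have := mem_closedBall.1 hx
        rw [dist_zero_right] at this
        linarith
      have d1 : ‖(S (q+1)).c.1 x - gfun x‖ ≤ ((q:ℝ)+2)⁻¹ := hrealg q x hxq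
      have d2 : ‖(S (q+1)).c.1 x - (S k).c.1 x‖ ≤ ((q:ℝ)+2)⁻¹ := hreal q k hk x hxq
      calc dist (gfun x) ((S k).c.1 x)
          ≤ dist (gfun x) ((S (q+1)).c.1 x) + dist ((S (q+1)).c.1 x) ((S k).c.1 x) :=
            dist_triangle _ _ _
        _ ≤ ((q:ℝ)+2)⁻¹ + ((q:ℝ)+2)⁻¹ := by
            rw [dist_comm (gfun x), dist_eq_norm, dist_eq_norm]
            exact add_le_add d1 d2
        _ < ε := hεq
    exact hcont.continuousAt (Metric.closedBall_mem_nhds_of_mem (by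
      rwa [mem_ball, dist_zero_right]))
  -- finite Hölder seminorm on compacts
  have gsemi : ∀ K : Set (Euc m), IsCompact K → holderSemi α K gfun < ⊤ := by
    intro K hK
    obtain ⟨R, hR⟩ := hK.isBounded.subset_closedBall (0 : Euc m)
    set p := ⌈R⌉₊ with hp
    have hKsub : K ⊆ closedBall 0 (((p+1:ℕ)):ℝ) := by
      refine hR.trans (closedBall_subset_closedBall ?_)
      have := Nat.le_ceil R
      push_cast; linarith
    have h1 : holderSemi α K gfun ≤ holderSemi α K ((S (p+1)).c.1)
        + holderSemi α K ((S (p+1)).c.1 - gfun) := by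
      calc holderSemi α K gfun
          = holderSemi α K ((S (p+1)).c.1 - ((S (p+1)).c.1 - gfun)) := by rw [sub_sub_cancel]
        _ ≤ _ := holderSemi_sub_le
    refine lt_of_le_of_lt h1 (ENNReal.add_lt_top.2 ⟨(S (p+1)).c.2.2 K hK, ?_⟩)
    refine lt_of_le_of_lt ((holderSemi_mono_set hKsub _).trans
      ((holderSemi_le_holderNorm _).trans (hlimb p))) ?_
    exact ENNReal.add_lt_top.2 ⟨ENNReal.ofReal_lt_top, ENNReal.ofReal_lt_top⟩
  set ghat : HolderMap m d α := ⟨gfun, gcont, gsemi⟩ with hghat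
  -- ghat lies in every V (S n)
  have hVmem : ∀ n, ghat ∈ (S n).V := by
    intro n t
    have hq : holderNorm α ((S n).K t) ((S n).c.1 - ghat.1)
        ≤ (S n).ε t / 4 + (S n).ε t / 4 := by
      refine holderNorm_le_double_of_tendsto (fun x => hgfun x) ?_
      filter_upwards [eventually_ge_atTop n] with k hk
      exact hcmem n k hk t
    exact hq.trans_lt (ennreal_quarter_add_quarter_lt ((S n).pos t) ((S n).le_one t))
  exact ⟨ghat, hV₀ (hVmem 0), Set.mem_iInter.2 fun n => hV n (hVmem (n+1))⟩


end Main
end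
end

section
/- Fix integers m, d ≥ 1, k ≥ 1 and α ∈ (0,1]. Let Y be the set of maps f : ℝ^m → ℝ^d of class C^k such that [D^k f]_{α,K} < ∞ for every compact K ⊆ ℝ^m, where D^k f denotes the k-th iterated Fréchet derivative. For compact K set ‖f‖_{k+α,K} = sup_{x∈K} ‖f(x)‖ + max_{1≤j≤k} sup_{x∈K} ‖D^j f(x)‖ + [D^k f]_{α,K}. Then Y, endowed with the topology generated by the sets { g ∈ Y : ∀ t ∈ T, ‖f − g‖_{k+α,K_t} < ε_t } over all f ∈ Y, all locally finite families {K_t}_{t∈T} of compact subsets of ℝ^m and all families {ε_t}_{t∈T} of extended positive reals ε_t ∈ (0,∞] (the strong C^{k+α}-Whitney topology), is a Baire space. -/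
open TopologicalSpace Set
open scoped ENNReal

noncomputable section

/-- Maps `ℝ^m → ℝ^d` of class `C^k` with `[D^k f]_{α,K} < ∞` for every compact `K`. -/
abbrev CkHolderMap (m d k : ℕ) (α : ℝ) : Type :=
  {f : Euc m → Euc d // ContDiff ℝ (k : ℕ∞) f ∧
    ∀ K : Set (Euc m), IsCompact K → holderSemi α K (iteratedFDeriv ℝ k f) < ⊤}

/-- The `C^{k+α}` norm over a compact set `K`:
`‖f‖_{k+α,K} = sup_{x∈K} ‖f x‖ + max_{1≤j≤k} sup_{x∈K} ‖D^j f x‖ + [D^k f]_{α,K}`,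
valued in `[0,∞]`. -/
noncomputable def ckHolderNorm (m d k : ℕ) (α : ℝ) (K : Set (Euc m))
    (f : Euc m → Euc d) : ℝ≥0∞ :=
  (⨆ (x) (_ : x ∈ K), ENNReal.ofReal ‖f x‖)
    + (⨆ j ∈ Finset.Icc 1 k, ⨆ (x) (_ : x ∈ K), ENNReal.ofReal ‖iteratedFDeriv ℝ j f x‖)
    + holderSemi α K (iteratedFDeriv ℝ k f)

/-- Generating sets of the strong `C^{k+α}`-Whitney topology: indexed by a locally finite
family of compact sets `K_t` and extended positive reals `ε_t`. -/
def strongBasicCk (m d k : ℕ) (α : ℝ) : Set (Set (CkHolderMap m d k α)) :=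
  { S | ∃ (T : Type) (K : T → Set (Euc m)) (ε : T → ℝ≥0∞) (f : CkHolderMap m d k α),
      (∀ t, IsCompact (K t)) ∧ LocallyFinite K ∧ (∀ t, 0 < ε t) ∧
      S = { g | ∀ t, ckHolderNorm m d k α (K t) (f.1 - g.1) < ε t } }

open scoped Topology

/-! ### Auxiliary lemmas -/

namespace Statement2Aux

open Filter Metric

/-! #### Generalities on the Hölder seminorm -/

section Holder

variable {E F : Type*} [NormedAddCommGroup E] [NormedAddCommGroup F]
  {α : ℝ} {A B : Set E} {f g g₁ g₂ : E → F} {c : ℝ≥0∞}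

lemma holderSemi_le
    (h : ∀ x ∈ A, ∀ y ∈ A, x ≠ y →
      ENNReal.ofReal (‖f x - f y‖ / ‖x - y‖ ^ α) ≤ c) :
    holderSemi α A f ≤ c :=
  iSup_le fun x => iSup_le fun hx => iSup_le fun y => iSup_le fun hy =>
    iSup_le fun hxy => h x hx y hy hxy

lemma le_holderSemi {x y : E} (hx : x ∈ A) (hy : y ∈ A) (hxy : x ≠ y) :
    ENNReal.ofReal (‖f x - f y‖ / ‖x - y‖ ^ α) ≤ holderSemi α A f :=
  le_iSup_of_le x (le_iSup_of_le hx (le_iSup_of_le y (le_iSup_of_le hy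
    (le_iSup_of_le hxy le_rfl))))

lemma holderSemi_mono (hAB : A ⊆ B) : holderSemi α A f ≤ holderSemi α B f :=
  holderSemi_le fun x hx y hy hxy => le_holderSemi (hAB hx) (hAB hy) hxy

lemma holderSemi_congr_neg (h : ∀ x ∈ A, f x = - g x) :
    holderSemi α A f = holderSemi α A g := by
  have key : ∀ (u v : E → F), (∀ x ∈ A, u x = - v x) → holderSemi α A u ≤ holderSemi α A v := by
    intro u v huv
    refine holderSemi_le fun x hx y hy hxy => ?_
    have : ‖u x - u y‖ = ‖v x - v y‖ := by
      rw [huv x hx, huv y hy, neg_sub_neg, norm_sub_rev]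
    rw [this]
    exact le_holderSemi hx hy hxy
  refine le_antisymm (key f g h) (key g f fun x hx => by rw [h x hx, neg_neg])

lemma holderSemi_add_le (h : ∀ x ∈ A, f x = g₁ x + g₂ x) :
    holderSemi α A f ≤ holderSemi α A g₁ + holderSemi α A g₂ := by
  refine holderSemi_le fun x hx y hy hxy => ?_
  have hnorm : ‖f x - f y‖ ≤ ‖g₁ x - g₁ y‖ + ‖g₂ x - g₂ y‖ := by
    rw [h x hx, h y hy, add_sub_add_comm]
    exact norm_add_le _ _
  have hdiv : ‖f x - f y‖ / ‖x - y‖ ^ α ≤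
      ‖g₁ x - g₁ y‖ / ‖x - y‖ ^ α + ‖g₂ x - g₂ y‖ / ‖x - y‖ ^ α := by
    rw [← add_div, div_eq_mul_inv, div_eq_mul_inv]
    exact mul_le_mul_of_nonneg_right hnorm (inv_nonneg.2 (Real.rpow_nonneg (norm_nonneg _) _))
  calc ENNReal.ofReal (‖f x - f y‖ / ‖x - y‖ ^ α)
      ≤ ENNReal.ofReal (‖g₁ x - g₁ y‖ / ‖x - y‖ ^ α + ‖g₂ x - g₂ y‖ / ‖x - y‖ ^ α) :=
        ENNReal.ofReal_le_ofReal hdiv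
    _ ≤ ENNReal.ofReal (‖g₁ x - g₁ y‖ / ‖x - y‖ ^ α)
        + ENNReal.ofReal (‖g₂ x - g₂ y‖ / ‖x - y‖ ^ α) := ENNReal.ofReal_add_le
    _ ≤ holderSemi α A g₁ + holderSemi α A g₂ :=
        add_le_add (le_holderSemi hx hy hxy) (le_holderSemi hx hy hxy)

lemma holderSemi_le_of_tendsto {F' : ℕ → E → F}
    (hpt : ∀ x ∈ A, Tendsto (fun j => F' j x) atTop (𝓝 (f x)))
    (hb : ∀ᶠ j in atTop, holderSemi α A (F' j) ≤ c) :
    holderSemi α A f ≤ c := by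
  refine holderSemi_le fun x hx y hy hxy => ?_
  have ht : Tendsto (fun j => ENNReal.ofReal (‖F' j x - F' j y‖ / ‖x - y‖ ^ α)) atTop
      (𝓝 (ENNReal.ofReal (‖f x - f y‖ / ‖x - y‖ ^ α))) :=
    (ENNReal.continuous_ofReal.tendsto _).comp
      ((((hpt x hx).sub (hpt y hy)).norm).div_const _)
  exact le_of_tendsto ht (hb.mono fun j hj => (le_holderSemi hx hy hxy).trans hj)

end Holder

/-! #### The `C^{k+α}` norm -/

section CkNorm

variable {m d k : ℕ} {α : ℝ} {K K' : Set (Euc m)} {u v w : Euc m → Euc d} {c ε : ℝ≥0∞}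

/-- First part of `ckHolderNorm`. -/
def sVal (K : Set (Euc m)) (u : Euc m → Euc d) : ℝ≥0∞ :=
  ⨆ (x) (_ : x ∈ K), ENNReal.ofReal ‖u x‖

/-- Second part of `ckHolderNorm`. -/
def sDer (k : ℕ) (K : Set (Euc m)) (u : Euc m → Euc d) : ℝ≥0∞ :=
  ⨆ j ∈ Finset.Icc 1 k, ⨆ (x) (_ : x ∈ K), ENNReal.ofReal ‖iteratedFDeriv ℝ j u x‖

lemma ckHolderNorm_eq :
    ckHolderNorm m d k α K u = sVal K u + sDer k K u
      + holderSemi α K (iteratedFDeriv ℝ k u) := rfl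

lemma le_sVal {x : Euc m} (hx : x ∈ K) : ENNReal.ofReal ‖u x‖ ≤ sVal K u :=
  le_iSup_of_le x (le_iSup_of_le hx le_rfl)

lemma sVal_le (h : ∀ x ∈ K, ENNReal.ofReal ‖u x‖ ≤ c) : sVal K u ≤ c :=
  iSup_le fun x => iSup_le fun hx => h x hx

lemma le_sDer {j : ℕ} {x : Euc m} (hj : j ∈ Finset.Icc 1 k) (hx : x ∈ K) :
    ENNReal.ofReal ‖iteratedFDeriv ℝ j u x‖ ≤ sDer k K u :=
  le_iSup_of_le j (le_iSup_of_le hj (le_iSup_of_le x (le_iSup_of_le hx le_rfl)))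

lemma sDer_le (h : ∀ j ∈ Finset.Icc 1 k, ∀ x ∈ K,
    ENNReal.ofReal ‖iteratedFDeriv ℝ j u x‖ ≤ c) : sDer k K u ≤ c :=
  iSup_le fun j => iSup_le fun hj => iSup_le fun x => iSup_le fun hx => h j hj x hx

lemma le_ckHolderNorm_val {x : Euc m} (hx : x ∈ K) :
    ENNReal.ofReal ‖u x‖ ≤ ckHolderNorm m d k α K u := by
  rw [ckHolderNorm_eq]
  exact (le_sVal hx).trans (le_self_add.trans le_self_add)

lemma le_ckHolderNorm_der {j : ℕ} {x : Euc m} (hj : j ∈ Finset.Icc 1 k) (hx : x ∈ K) :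
    ENNReal.ofReal ‖iteratedFDeriv ℝ j u x‖ ≤ ckHolderNorm m d k α K u := by
  rw [ckHolderNorm_eq]
  exact (le_sDer hj hx).trans (le_add_self.trans le_self_add)

lemma holderSemi_le_ckHolderNorm :
    holderSemi α K (iteratedFDeriv ℝ k u) ≤ ckHolderNorm m d k α K u := by
  rw [ckHolderNorm_eq]; exact le_add_self

lemma ckHolderNorm_mono (hKK' : K' ⊆ K) :
    ckHolderNorm m d k α K' u ≤ ckHolderNorm m d k α K u := by
  rw [ckHolderNorm_eq, ckHolderNorm_eq]
  refine add_le_add (add_le_add ?_ ?_) (holderSemi_mono hKK')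
  · exact sVal_le fun x hx => le_sVal (hKK' hx)
  · exact sDer_le fun j hj x hx => le_sDer hj (hKK' hx)

lemma contDiff_nat_of_le {u : Euc m → Euc d} (hu : ContDiff ℝ (k : ℕ∞) u) {j : ℕ}
    (hj : j ≤ k) : ContDiff ℝ (j : ℕ) u :=
  hu.of_le (by exact_mod_cast hj)

lemma iteratedFDeriv_sub_apply' {i : ℕ} {f g : Euc m → Euc d}
    (hf : ContDiff ℝ (i : ℕ) f) (hg : ContDiff ℝ (i : ℕ) g) (x : Euc m) :
    iteratedFDeriv ℝ i (f - g) x = iteratedFDeriv ℝ i f x - iteratedFDeriv ℝ i g x := by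
  have h1 : (f - g) = (f + fun y => -(g y)) := funext fun y => sub_eq_add_neg _ _
  rw [h1, iteratedFDeriv_add_apply hf.contDiffAt hg.neg.contDiffAt]
  have h2 : (fun y => -(g y)) = -g := rfl
  rw [h2, iteratedFDeriv_neg_apply, sub_eq_add_neg]

lemma ckHolderNorm_add_le (hu : ContDiff ℝ (k : ℕ∞) u) (hv : ContDiff ℝ (k : ℕ∞) v) :
    ckHolderNorm m d k α K (u + v) ≤ ckHolderNorm m d k α K u + ckHolderNorm m d k α K v := by
  rw [ckHolderNorm_eq, ckHolderNorm_eq, ckHolderNorm_eq]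
  have hA : sVal K (u + v) ≤ sVal K u + sVal K v := by
    refine sVal_le fun x hx => ?_
    refine (ENNReal.ofReal_le_ofReal (norm_add_le (u x) (v x))).trans
      (ENNReal.ofReal_add_le.trans (add_le_add (le_sVal hx) (le_sVal hx)))
  have hB : sDer k K (u + v) ≤ sDer k K u + sDer k K v := by
    refine sDer_le fun j hj x hx => ?_
    rw [iteratedFDeriv_add_apply (contDiff_nat_of_le hu (Finset.mem_Icc.1 hj).2).contDiffAt
      (contDiff_nat_of_le hv (Finset.mem_Icc.1 hj).2).contDiffAt]
    exact (ENNReal.ofReal_le_ofReal (norm_add_le _ _)).trans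
      (ENNReal.ofReal_add_le.trans (add_le_add (le_sDer hj hx) (le_sDer hj hx)))
  have hC : holderSemi α K (iteratedFDeriv ℝ k (u + v)) ≤
      holderSemi α K (iteratedFDeriv ℝ k u) + holderSemi α K (iteratedFDeriv ℝ k v) :=
    holderSemi_add_le fun x _ =>
      iteratedFDeriv_add_apply (contDiff_nat_of_le hu le_rfl).contDiffAt (contDiff_nat_of_le hv le_rfl).contDiffAt
  calc sVal K (u + v) + sDer k K (u + v) + holderSemi α K (iteratedFDeriv ℝ k (u + v))
      ≤ (sVal K u + sVal K v) + (sDer k K u + sDer k K v)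
        + (holderSemi α K (iteratedFDeriv ℝ k u) + holderSemi α K (iteratedFDeriv ℝ k v)) :=
        add_le_add (add_le_add hA hB) hC
    _ = sVal K u + sDer k K u + holderSemi α K (iteratedFDeriv ℝ k u)
        + (sVal K v + sDer k K v + holderSemi α K (iteratedFDeriv ℝ k v)) := by ring

lemma ckHolderNorm_neg : ckHolderNorm m d k α K (-u) = ckHolderNorm m d k α K u := by
  rw [ckHolderNorm_eq, ckHolderNorm_eq]
  have hA : sVal K (-u) = sVal K u := by
    simp only [sVal, Pi.neg_apply, norm_neg]
  have hB : sDer k K (-u) = sDer k K u := by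
    simp only [sDer, iteratedFDeriv_neg_apply, norm_neg]
  have hC : holderSemi α K (iteratedFDeriv ℝ k (-u)) =
      holderSemi α K (iteratedFDeriv ℝ k u) :=
    holderSemi_congr_neg fun x _ => iteratedFDeriv_neg_apply
  rw [hA, hB, hC]

lemma ckHolderNorm_sub_symm {a b : Euc m → Euc d} :
    ckHolderNorm m d k α K (a - b) = ckHolderNorm m d k α K (b - a) := by
  rw [show a - b = -(b - a) from (neg_sub b a).symm, ckHolderNorm_neg]

lemma ckHolderNorm_sub_triangle {a b c' : Euc m → Euc d}
    (ha : ContDiff ℝ (k : ℕ∞) a) (hb : ContDiff ℝ (k : ℕ∞) b) (hc : ContDiff ℝ (k : ℕ∞) c') :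
    ckHolderNorm m d k α K (a - c') ≤
      ckHolderNorm m d k α K (a - b) + ckHolderNorm m d k α K (b - c') := by
  rw [show a - c' = (a - b) + (b - c') from (sub_add_sub_cancel a b c').symm]
  exact ckHolderNorm_add_le (ha.sub hb) (hb.sub hc)

lemma ckHolderNorm_zero_fun : ckHolderNorm m d k α K (0 : Euc m → Euc d) = 0 := by
  have hz : iteratedFDeriv ℝ k (0 : Euc m → Euc d) = 0 := iteratedFDeriv_zero_fun
  refine le_antisymm ?_ (zero_le)
  rw [ckHolderNorm_eq]
  have hA : sVal K (0 : Euc m → Euc d) ≤ 0 :=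
    sVal_le fun x _ => by simp
  have hB : sDer k K (0 : Euc m → Euc d) ≤ 0 := by
    refine sDer_le fun j hj x hx => ?_
    have : iteratedFDeriv ℝ j (0 : Euc m → Euc d) = 0 := iteratedFDeriv_zero_fun
    simp [this]
  have hC : holderSemi α K (iteratedFDeriv ℝ k (0 : Euc m → Euc d)) ≤ 0 := by
    refine holderSemi_le fun x hx y hy hxy => ?_
    simp [hz]
  calc sVal K (0:Euc m → Euc d) + sDer k K 0 + holderSemi α K (iteratedFDeriv ℝ k 0)
      ≤ 0 + 0 + 0 := add_le_add (add_le_add hA hB) hC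
    _ = 0 := by simp

/-- Lower semicontinuity of the norm under pointwise convergence of the maps and their
derivatives. -/
lemma ckHolderNorm_le_of_tendsto (hk1 : 1 ≤ k) {φ : ℕ → Euc m → Euc d} {ψ : Euc m → Euc d}
    (hval : ∀ x ∈ K, Tendsto (fun j => φ j x) atTop (𝓝 (ψ x)))
    (hder : ∀ l, 1 ≤ l → l ≤ k → ∀ x ∈ K,
      Tendsto (fun j => iteratedFDeriv ℝ l (φ j) x) atTop (𝓝 (iteratedFDeriv ℝ l ψ x)))
    (hb : ∀ᶠ j in atTop, ckHolderNorm m d k α K (φ j) < ε) :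
    ckHolderNorm m d k α K ψ ≤ ε + ε + ε := by
  rw [ckHolderNorm_eq]
  refine add_le_add (add_le_add ?_ ?_) ?_
  · refine sVal_le fun x hx => ?_
    have ht : Tendsto (fun j => ENNReal.ofReal ‖φ j x‖) atTop (𝓝 (ENNReal.ofReal ‖ψ x‖)) :=
      (ENNReal.continuous_ofReal.tendsto _).comp (hval x hx).norm
    exact le_of_tendsto ht (hb.mono fun j hj => ((le_ckHolderNorm_val hx).trans hj.le))
  · refine sDer_le fun l hl x hx => ?_
    obtain ⟨hl1, hl2⟩ := Finset.mem_Icc.1 hl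
    have ht : Tendsto (fun j => ENNReal.ofReal ‖iteratedFDeriv ℝ l (φ j) x‖) atTop
        (𝓝 (ENNReal.ofReal ‖iteratedFDeriv ℝ l ψ x‖)) :=
      (ENNReal.continuous_ofReal.tendsto _).comp (hder l hl1 hl2 x hx).norm
    exact le_of_tendsto ht (hb.mono fun j hj => ((le_ckHolderNorm_der hl hx).trans hj.le))
  · refine holderSemi_le_of_tendsto (fun x hx => hder k hk1 le_rfl x hx)
      (hb.mono fun j hj => holderSemi_le_ckHolderNorm.trans hj.le)

end CkNorm

/-! #### Arithmetic helpers in `ℝ≥0∞` -/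

lemma three_quarters {a : ℝ≥0∞} (ha : 0 < a) (ha' : a ≠ ⊤) :
    a / 4 + a / 4 + a / 4 < a := by
  have h4 : a / 4 ≠ ⊤ := (ENNReal.div_lt_top ha' (by norm_num)).ne
  have hsum : a / 4 + a / 4 + a / 4 ≠ ⊤ :=
    ENNReal.add_ne_top.2 ⟨ENNReal.add_ne_top.2 ⟨h4, h4⟩, h4⟩
  rw [← ENNReal.toReal_lt_toReal hsum ha']
  have hpos : 0 < a.toReal := ENNReal.toReal_pos ha.ne' ha'
  rw [ENNReal.toReal_add (ENNReal.add_ne_top.2 ⟨h4, h4⟩) h4, ENNReal.toReal_add h4 h4,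
    ENNReal.toReal_div]
  norm_num
  linarith

/-! #### The zero map -/

variable {m d k : ℕ} {α : ℝ}

/-- The zero element of `CkHolderMap`. -/
def zeroCk (m d k : ℕ) (α : ℝ) : CkHolderMap m d k α := by
  refine ⟨0, contDiff_const (c := (0 : Euc d)), fun K hK => ?_⟩
  have hz : iteratedFDeriv ℝ k (0 : Euc m → Euc d) = 0 := iteratedFDeriv_zero_fun
  have : holderSemi α K (iteratedFDeriv ℝ k (0 : Euc m → Euc d)) ≤ 0 := by
    refine holderSemi_le fun x hx y hy hxy => by simp [hz]
  exact lt_of_le_of_lt this (by simp)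

lemma ckHolderNorm_self (f : CkHolderMap m d k α) (K : Set (Euc m)) :
    ckHolderNorm m d k α K (f.1 - f.1) = 0 := by
  rw [sub_self]; exact ckHolderNorm_zero_fun

/-! #### Basic sets and the basis property -/

lemma recenter {S : Set (CkHolderMap m d k α)} (hS : S ∈ strongBasicCk m d k α)
    {x : CkHolderMap m d k α} (hx : x ∈ S) :
    ∃ (T : Type) (K : T → Set (Euc m)) (δ : T → ℝ≥0∞),
      (∀ t, IsCompact (K t)) ∧ LocallyFinite K ∧ (∀ t, 0 < δ t) ∧
      {g : CkHolderMap m d k α | ∀ t, ckHolderNorm m d k α (K t) (x.1 - g.1) < δ t} ⊆ S := by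
  obtain ⟨T, K, ε, f, hK, hLF, hε, rfl⟩ := hS
  refine ⟨T, K, fun t => ε t - ckHolderNorm m d k α (K t) (f.1 - x.1), hK, hLF, ?_, ?_⟩
  · intro t
    exact tsub_pos_iff_lt.2 (hx t)
  · intro g hg t
    have htri := ckHolderNorm_sub_triangle (K := K t) (α := α) f.2.1 x.2.1 g.2.1
    have hN : ckHolderNorm m d k α (K t) (f.1 - x.1) ≠ ⊤ := ((hx t).trans_le le_top).ne
    calc ckHolderNorm m d k α (K t) (f.1 - g.1)
        ≤ ckHolderNorm m d k α (K t) (f.1 - x.1) + ckHolderNorm m d k α (K t) (x.1 - g.1) := htri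
      _ < ckHolderNorm m d k α (K t) (f.1 - x.1)
          + (ε t - ckHolderNorm m d k α (K t) (f.1 - x.1)) :=
          ENNReal.add_lt_add_left hN (hg t)
      _ = ε t := add_tsub_cancel_of_le (hx t).le

lemma univ_mem_strongBasic : (univ : Set (CkHolderMap m d k α)) ∈ strongBasicCk m d k α := by
  refine ⟨Empty, fun t => t.elim, fun t => t.elim, zeroCk m d k α,
    fun t => t.elim, locallyFinite_of_finite _, fun t => t.elim, ?_⟩
  ext g; simp

lemma basis_strong :
    @IsTopologicalBasis (CkHolderMap m d k α) (generateFrom (strongBasicCk m d k α))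
      (strongBasicCk m d k α) := by
  letI : TopologicalSpace (CkHolderMap m d k α) := generateFrom (strongBasicCk m d k α)
  refine ⟨?_, ?_, rfl⟩
  · rintro S₁ hS₁ S₂ hS₂ x ⟨hx₁, hx₂⟩
    obtain ⟨T₁, K₁, δ₁, hK₁, hLF₁, hδ₁, hsub₁⟩ := recenter hS₁ hx₁
    obtain ⟨T₂, K₂, δ₂, hK₂, hLF₂, hδ₂, hsub₂⟩ := recenter hS₂ hx₂
    refine ⟨{g | ∀ t : T₁ ⊕ T₂,
        ckHolderNorm m d k α (Sum.elim K₁ K₂ t) (x.1 - g.1) < Sum.elim δ₁ δ₂ t}, ?_, ?_, ?_⟩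
    · exact ⟨T₁ ⊕ T₂, Sum.elim K₁ K₂, Sum.elim δ₁ δ₂, x,
        fun t => Sum.rec (fun a => hK₁ a) (fun b => hK₂ b) t, hLF₁.sumElim hLF₂,
        fun t => Sum.rec (fun a => hδ₁ a) (fun b => hδ₂ b) t, rfl⟩
    · intro t
      rcases t with a | b
      · rw [show ckHolderNorm m d k α (Sum.elim K₁ K₂ (Sum.inl a)) (x.1 - x.1)
          = 0 from ckHolderNorm_self x _]
        exact hδ₁ a
      · rw [show ckHolderNorm m d k α (Sum.elim K₁ K₂ (Sum.inr b)) (x.1 - x.1)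
          = 0 from ckHolderNorm_self x _]
        exact hδ₂ b
    · intro g hg
      exact ⟨hsub₁ fun a => hg (Sum.inl a), hsub₂ fun b => hg (Sum.inr b)⟩
  · refine subset_antisymm (subset_univ _) ?_
    intro x _
    exact ⟨univ, univ_mem_strongBasic, mem_univ x⟩

/-! #### Stages -/

/-- The data of a basic neighbourhood in the strong topology, together with a
distinguished index. -/
structure Stage (m d k : ℕ) (α : ℝ) where
  f : CkHolderMap m d k α
  T : Type
  K : T → Set (Euc m)
  ε : T → ℝ≥0∞
  t0 : T
  hK : ∀ t, IsCompact (K t)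
  hLF : LocallyFinite K
  hε : ∀ t, 0 < ε t

namespace Stage

variable {m d k : ℕ} {α : ℝ}

/-- The open basic set of a stage. -/
def S (P : Stage m d k α) : Set (CkHolderMap m d k α) :=
  {g | ∀ t, ckHolderNorm m d k α (P.K t) (P.f.1 - g.1) < P.ε t}

/-- An enlarged "closed" version of the basic set of a stage. -/
def Scl (P : Stage m d k α) : Set (CkHolderMap m d k α) :=
  {g | ∀ t, ckHolderNorm m d k α (P.K t) (P.f.1 - g.1) ≤ P.ε t + P.ε t + P.ε t}

lemma S_mem_basic (P : Stage m d k α) : P.S ∈ strongBasicCk m d k α :=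
  ⟨P.T, P.K, P.ε, P.f, P.hK, P.hLF, P.hε, rfl⟩

lemma self_mem (P : Stage m d k α) : P.f ∈ P.S := fun t => by
  rw [ckHolderNorm_self]; exact P.hε t

lemma S_subset_Scl (P : Stage m d k α) : P.S ⊆ P.Scl := fun g hg t =>
  (hg t).le.trans (le_self_add.trans le_self_add)

end Stage

/-- Key refinement step: inside any open set (given via a basic set around `f`), one can find
a stage centered at `f` whose enlarged set is still contained in the open set, and which
controls a prescribed closed ball with prescribed accuracy. -/
lemma exists_stage {O : Set (CkHolderMap m d k α)} {f : CkHolderMap m d k α}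
    (hO : ∃ S ∈ strongBasicCk m d k α, f ∈ S ∧ S ⊆ O) (R : ℝ) {η : ℝ≥0∞} (hη : 0 < η) :
    ∃ P : Stage m d k α, P.f = f ∧ P.Scl ⊆ O ∧
      P.K P.t0 = Metric.closedBall 0 R ∧ P.ε P.t0 ≤ η := by
  obtain ⟨S, hSb, hfS, hSO⟩ := hO
  obtain ⟨T, K, δ, hK, hLF, hδ, hsub⟩ := recenter hSb hfS
  set ε₁ : T → ℝ≥0∞ := fun t => min (δ t) 1 / 4 with hε₁
  have hε₁pos : ∀ t, 0 < ε₁ t := fun t =>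
    ENNReal.div_pos (lt_min (hδ t) one_pos).ne' (by norm_num)
  have hε₁lt : ∀ t, ε₁ t + ε₁ t + ε₁ t < δ t := by
    intro t
    have hmin : (0 : ℝ≥0∞) < min (δ t) 1 := lt_min (hδ t) one_pos
    have hmint : min (δ t) 1 ≠ ⊤ :=
      ne_top_of_le_ne_top ENNReal.one_ne_top (min_le_right _ _)
    exact lt_of_lt_of_le (three_quarters hmin hmint) (min_le_left _ _)
  refine ⟨⟨f, T ⊕ Unit, Sum.elim K (fun _ => Metric.closedBall 0 R),
      Sum.elim ε₁ (fun _ => min η 1), Sum.inr (),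
      fun t => Sum.rec (fun a => hK a) (fun _ => isCompact_closedBall _ _) t,
      hLF.sumElim (locallyFinite_of_finite _),
      fun t => Sum.rec (fun a => hε₁pos a) (fun _ => lt_min hη one_pos) t⟩, rfl, ?_, rfl,
      min_le_left _ _⟩
  intro g hg
  refine hSO (hsub fun t => ?_)
  have := hg (Sum.inl t)
  exact lt_of_le_of_lt this (hε₁lt t)

/-! #### Uniform Cauchy sequences on balls and limits -/

/-- From uniform Cauchy on all closed balls, get a pointwise limit together with locally
uniform convergence. -/
lemma uc_limit {Y : Type*} [NormedAddCommGroup Y] [CompleteSpace Y] (F : ℕ → Euc m → Y)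
    (hF : ∀ R : ℕ, UniformCauchySeqOn F atTop (Metric.closedBall 0 (R : ℝ))) :
    ∃ G : Euc m → Y, (∀ x, Tendsto (fun j => F j x) atTop (𝓝 (G x))) ∧
      TendstoLocallyUniformly F G atTop := by
  have hpt : ∀ x : Euc m, ∃ y, Tendsto (fun j => F j x) atTop (𝓝 y) := by
    intro x
    have hx : x ∈ Metric.closedBall (0 : Euc m) ((⌈‖x‖⌉₊ : ℕ) : ℝ) := by
      rw [Metric.mem_closedBall, dist_zero_right]
      exact Nat.le_ceil _
    have hc : CauchySeq fun j => F j x := by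
      rw [Metric.cauchySeq_iff]
      intro ε hε
      obtain ⟨N, hN⟩ := Metric.uniformCauchySeqOn_iff.1 (hF ⌈‖x‖⌉₊) ε hε
      exact ⟨N, fun a ha b hb => hN a ha b hb x hx⟩
    exact cauchySeq_tendsto_of_complete hc
  choose G hG using hpt
  refine ⟨G, hG, ?_⟩
  rw [tendstoLocallyUniformly_iff_forall_isCompact]
  intro Kc hKc
  obtain ⟨r, hr⟩ := hKc.isBounded.subset_closedBall 0
  have hsub : Kc ⊆ Metric.closedBall (0 : Euc m) ((⌈max r 0⌉₊ : ℕ) : ℝ) :=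
    hr.trans (Metric.closedBall_subset_closedBall ((le_max_left r 0).trans (Nat.le_ceil _)))
  exact ((hF _).tendstoUniformlyOn_of_tendsto fun x _ => hG x).mono hsub

/-- Abstract uniform-Cauchy criterion from the chain construction. -/
lemma uc_of_key {Y : Type*} [PseudoMetricSpace Y] (G : ℕ → Euc m → Y)
    (hkey : ∀ (n j : ℕ), n ≤ j → ∀ x ∈ Metric.closedBall (0 : Euc m) (n : ℝ),
      dist (G n x) (G j x) ≤ (2⁻¹ : ℝ) ^ n) (R : ℕ) :
    UniformCauchySeqOn G atTop (Metric.closedBall 0 (R : ℝ)) := by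
  rw [Metric.uniformCauchySeqOn_iff]
  intro ε hε
  have h2 : Tendsto (fun n : ℕ => (2⁻¹ : ℝ) ^ n * 2) atTop (𝓝 0) := by
    simpa using (tendsto_pow_atTop_nhds_zero_of_lt_one (r := (2⁻¹ : ℝ)) (by norm_num)
      (by norm_num)).mul_const (2 : ℝ)
  obtain ⟨n, hn2, hn1⟩ := ((h2.eventually (gt_mem_nhds hε)).and (eventually_ge_atTop R)).exists
  refine ⟨n, fun a ha b hb x hx => ?_⟩
  have hx' : x ∈ Metric.closedBall (0 : Euc m) (n : ℝ) :=
    Metric.closedBall_subset_closedBall (by exact_mod_cast hn1) hx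
  calc dist (G a x) (G b x) ≤ dist (G n x) (G a x) + dist (G n x) (G b x) :=
        dist_triangle_left _ _ _
    _ ≤ (2⁻¹ : ℝ) ^ n + (2⁻¹ : ℝ) ^ n := add_le_add (hkey n a ha x hx') (hkey n b hb x hx')
    _ = (2⁻¹ : ℝ) ^ n * 2 := by ring
    _ < ε := hn2

/-- The central analytic lemma: a sequence of `C^k` maps which is uniformly Cauchy on all
closed balls together with all derivatives up to order `k` has a `C^k` limit, with
convergence of all derivatives. -/
lemma exists_ck_limit (k : ℕ) (fs : ℕ → Euc m → Euc d)
    (hsm : ∀ j, ContDiff ℝ (k : ℕ∞) (fs j))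
    (hval : ∀ R : ℕ, UniformCauchySeqOn (fun j x => fs j x) atTop
      (Metric.closedBall 0 (R : ℝ)))
    (hder : ∀ l, l ≤ k → ∀ R : ℕ, UniformCauchySeqOn
      (fun j x => iteratedFDeriv ℝ l (fs j) x) atTop (Metric.closedBall 0 (R : ℝ))) :
    ∃ g : Euc m → Euc d, ContDiff ℝ (k : ℕ∞) g ∧
      (∀ x, Tendsto (fun j => fs j x) atTop (𝓝 (g x))) ∧
      ∀ l, l ≤ k → ∀ x, Tendsto (fun j => iteratedFDeriv ℝ l (fs j) x) atTop
        (𝓝 (iteratedFDeriv ℝ l g x)) := by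
  obtain ⟨g, hgpt, _⟩ := uc_limit (fun j x => fs j x) hval
  have hD : ∀ l, ∃ Φ : Euc m → (Euc m [×l]→L[ℝ] Euc d), l ≤ k →
      (∀ x, Tendsto (fun j => iteratedFDeriv ℝ l (fs j) x) atTop (𝓝 (Φ x))) ∧
      TendstoLocallyUniformly (fun j x => iteratedFDeriv ℝ l (fs j) x) Φ atTop := by
    intro l
    by_cases hl : l ≤ k
    · obtain ⟨Φ, h1, h2⟩ := uc_limit _ (hder l hl)
      exact ⟨Φ, fun _ => ⟨h1, h2⟩⟩
    · exact ⟨fun _ => 0, fun h => absurd h hl⟩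
  choose Φ hΦ using hD
  have hTaylorFs : ∀ j, HasFTaylorSeriesUpTo (k : ℕ∞) (fs j) (ftaylorSeries ℝ (fs j)) := by
    intro j
    rw [← hasFTaylorSeriesUpToOn_univ_iff, ← ftaylorSeriesWithin_univ]
    exact (contDiffOn_univ.2 (hsm j)).ftaylorSeriesWithin uniqueDiffOn_univ
  set P : Euc m → FormalMultilinearSeries ℝ (Euc m) (Euc d) := fun x l => Φ l x with hPdef
  have hTaylor : HasFTaylorSeriesUpTo (k : ℕ∞) g P := by
    constructor
    · intro x
      have h0 := (hΦ 0 (Nat.zero_le k)).1 x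
      have h1 : Tendsto (fun j => (iteratedFDeriv ℝ 0 (fs j) x).curry0) atTop
          (𝓝 ((Φ 0 x).curry0)) := by
        have hcont : Continuous fun M : Euc m [×0]→L[ℝ] Euc d => M 0 :=
          continuous_eval_const _
        exact (hcont.tendsto _).comp h0
      have h2 : (fun j => (iteratedFDeriv ℝ 0 (fs j) x).curry0) = fun j => fs j x := by
        funext j
        simp [ContinuousMultilinearMap.curry0, iteratedFDeriv_zero_apply]
      rw [h2] at h1
      exact tendsto_nhds_unique h1 (hgpt x)
    · intro n hn x
      have hnk : n < k := by exact_mod_cast hn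
      have hf : ∀ j (y : Euc m), HasFDerivAt (fun z => iteratedFDeriv ℝ n (fs j) z)
          ((iteratedFDeriv ℝ (n + 1) (fs j) y).curryLeft) y := by
        intro j y
        exact (hTaylorFs j).fderiv n (by exact_mod_cast hnk) y
      have hf' : TendstoLocallyUniformly
          (fun j y => (iteratedFDeriv ℝ (n + 1) (fs j) y).curryLeft)
          (fun y => (Φ (n + 1) y).curryLeft) atTop := by
        have h := (hΦ (n + 1) hnk).2
        rw [tendstoLocallyUniformly_iff_forall_isCompact] at h ⊢
        intro Kc hKc
        have he : UniformContinuous (continuousMultilinearCurryLeftEquiv ℝ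
            (fun _ : Fin (n + 1) => Euc m) (Euc d)) :=
          (continuousMultilinearCurryLeftEquiv ℝ (fun _ : Fin (n + 1) => Euc m)
            (Euc d)).isometry.uniformContinuous
        exact he.comp_tendstoUniformlyOn (h Kc hKc)
      have := hasFDerivAt_of_tendstoLocallyUniformlyOn isOpen_univ
        (tendstoLocallyUniformlyOn_univ.2 hf') (fun j y _ => hf j y)
        (fun y _ => (hΦ n hnk.le).1 y) (mem_univ x)
      exact this
    · intro n hn
      have hnk : n ≤ k := by exact_mod_cast hn
      exact ((hΦ n hnk).2).continuous
        (Eventually.of_forall fun j => (hsm j).continuous_iteratedFDeriv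
          (by exact_mod_cast hnk)).frequently
  refine ⟨g, hTaylor.contDiff, hgpt, fun l hl x => ?_⟩
  have heq : iteratedFDeriv ℝ l g x = Φ l x :=
    (hTaylor.eq_iteratedFDeriv (by exact_mod_cast hl) x).symm
  rw [heq]
  exact (hΦ l hl).1 x

end Statement2Aux

open Statement2Aux Filter Metric

/-- the space of `C^k` maps `ℝ^m → ℝ^d` whose `k`-th derivative has locally
finite `α`-Hölder seminorm, endowed with the strong `C^{k+α}`-Whitney topology,
is a Baire space. -/
theorem statement2 (m d k : ℕ) (hm : 1 ≤ m) (hd : 1 ≤ d) (hk : 1 ≤ k)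
    (α : ℝ) (hα : α ∈ Set.Ioc (0:ℝ) 1) :
    @BaireSpace (CkHolderMap m d k α) (generateFrom (strongBasicCk m d k α)) := by
  letI : TopologicalSpace (CkHolderMap m d k α) := generateFrom (strongBasicCk m d k α)
  have hbasis := basis_strong (m := m) (d := d) (k := k) (α := α)
  refine ⟨fun U hUopen hUdense => ?_⟩
  rw [dense_iff_inter_open]
  intro W hW hWne
  classical
  -- pass from open sets to basic sets
  have hGen : ∀ (O : Set (CkHolderMap m d k α)), IsOpen O → ∀ f ∈ O,
      ∃ S ∈ strongBasicCk m d k α, f ∈ S ∧ S ⊆ O := by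
    intro O hO f hf
    exact hbasis.mem_nhds_iff.1 (hO.mem_nhds hf)
  -- step of the recursive construction
  have hstep : ∀ (n : ℕ) (P : Stage m d k α), ∃ Q : Stage m d k α,
      Q.Scl ⊆ P.S ∩ U (n + 1) ∧ Q.K Q.t0 = Metric.closedBall 0 (((n+1 : ℕ)) : ℝ) ∧
      Q.ε Q.t0 ≤ ENNReal.ofReal ((2⁻¹ : ℝ) ^ (n+1)) := by
    intro n P
    have hSopen : IsOpen P.S := hbasis.isOpen P.S_mem_basic
    have hOopen : IsOpen (P.S ∩ U (n + 1)) := hSopen.inter (hUopen (n + 1))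
    have hOne : (P.S ∩ U (n + 1)).Nonempty :=
      (hUdense (n + 1)).inter_open_nonempty P.S hSopen ⟨P.f, P.self_mem⟩
    obtain ⟨f₁, hf₁⟩ := hOne
    obtain ⟨Q, hQf, hQScl, hQK, hQε⟩ := exists_stage (hGen _ hOopen f₁ hf₁)
      (((n+1 : ℕ)) : ℝ) (η := ENNReal.ofReal ((2⁻¹ : ℝ) ^ (n+1)))
      (ENNReal.ofReal_pos.2 (by positivity))
    exact ⟨Q, hQScl, hQK, hQε⟩
  choose step hstep1 hstep2 hstep3 using hstep
  -- stage 0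
  have hO₀ : IsOpen (W ∩ U 0) := hW.inter (hUopen 0)
  have hO₀ne : (W ∩ U 0).Nonempty := (hUdense 0).inter_open_nonempty W hW hWne
  obtain ⟨f₀, hf₀⟩ := hO₀ne
  obtain ⟨P₀, hP₀f, hP₀Scl, hP₀K, hP₀ε⟩ := exists_stage (hGen _ hO₀ f₀ hf₀)
    (((0 : ℕ)) : ℝ) (η := ENNReal.ofReal ((2⁻¹ : ℝ) ^ (0:ℕ)))
    (ENNReal.ofReal_pos.2 (by positivity))
  -- the chain of stages
  set σ : ℕ → Stage m d k α := fun n => Nat.rec P₀ (fun n P => step n P) n with hσdef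
  have hσ0 : σ 0 = P₀ := rfl
  have hσs : ∀ n, σ (n + 1) = step n (σ n) := fun n => rfl
  have hScl : ∀ n, (σ (n + 1)).Scl ⊆ (σ n).S ∩ U (n + 1) := fun n => by
    rw [hσs]; exact hstep1 n (σ n)
  have hball : ∀ n, (σ n).K ((σ n).t0) = Metric.closedBall 0 (n : ℝ) ∧
      (σ n).ε ((σ n).t0) ≤ ENNReal.ofReal ((2⁻¹ : ℝ) ^ n) := by
    intro n
    cases n with
    | zero => exact ⟨by rw [hσ0]; exact_mod_cast hP₀K, by rw [hσ0]; exact_mod_cast hP₀ε⟩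
    | succ n => exact ⟨by rw [hσs]; exact_mod_cast hstep2 n (σ n),
        by rw [hσs]; exact_mod_cast hstep3 n (σ n)⟩
  -- the chain of sets is decreasing
  have hchainS : ∀ n j, n ≤ j → (σ j).S ⊆ (σ n).S := by
    intro n j hnj
    induction j, hnj using Nat.le_induction with
    | base => exact subset_rfl
    | succ j hnj ih =>
      exact subset_trans (subset_trans (σ (j+1)).S_subset_Scl
        (subset_trans (hScl j) inter_subset_left)) ih
  have hmem : ∀ n j, n ≤ j → (σ j).f ∈ (σ n).S := fun n j h =>
    hchainS n j h (σ j).self_mem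
  -- smoothness of all the centers
  set fs : ℕ → Euc m → Euc d := fun j => ((σ j).f).1 with hfsdef
  have hfsm : ∀ j, ContDiff ℝ (k : ℕ∞) (fs j) := fun j => ((σ j).f).2.1
  -- the key Cauchy bound
  have hCauchyN : ∀ (n j : ℕ), n ≤ j →
      ckHolderNorm m d k α (Metric.closedBall 0 (n : ℝ)) (fs n - fs j)
        ≤ ENNReal.ofReal ((2⁻¹ : ℝ) ^ n) := by
    intro n j h
    have h1 := hmem n j h ((σ n).t0)
    rw [(hball n).1] at h1
    exact h1.le.trans (hball n).2
  have hkey0 : ∀ (n j : ℕ), n ≤ j → ∀ x ∈ Metric.closedBall (0 : Euc m) (n : ℝ),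
      dist (fs n x) (fs j x) ≤ (2⁻¹ : ℝ) ^ n := by
    intro n j h x hx
    have h1 : ENNReal.ofReal ‖(fs n - fs j) x‖ ≤ ENNReal.ofReal ((2⁻¹ : ℝ) ^ n) :=
      (le_ckHolderNorm_val (α := α) (k := k) hx).trans (hCauchyN n j h)
    rw [ENNReal.ofReal_le_ofReal_iff (by positivity)] at h1
    rw [dist_eq_norm]
    exact h1
  have hkeyl : ∀ l, 1 ≤ l → l ≤ k → ∀ (n j : ℕ), n ≤ j →
      ∀ x ∈ Metric.closedBall (0 : Euc m) (n : ℝ),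
      dist (iteratedFDeriv ℝ l (fs n) x) (iteratedFDeriv ℝ l (fs j) x) ≤ (2⁻¹ : ℝ) ^ n := by
    intro l hl1 hl2 n j h x hx
    have h1 : ENNReal.ofReal ‖iteratedFDeriv ℝ l (fs n - fs j) x‖
        ≤ ENNReal.ofReal ((2⁻¹ : ℝ) ^ n) :=
      (le_ckHolderNorm_der (α := α) (Finset.mem_Icc.2 ⟨hl1, hl2⟩) hx).trans (hCauchyN n j h)
    rw [iteratedFDeriv_sub_apply' (contDiff_nat_of_le (hfsm n) hl2)
      (contDiff_nat_of_le (hfsm j) hl2)] at h1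
    rw [ENNReal.ofReal_le_ofReal_iff (by positivity)] at h1
    rw [dist_eq_norm]
    exact h1
  -- uniform Cauchy on balls
  have hUCval : ∀ R : ℕ, UniformCauchySeqOn (fun j x => fs j x) atTop
      (Metric.closedBall 0 (R : ℝ)) :=
    uc_of_key _ hkey0
  have hUCder : ∀ l, l ≤ k → ∀ R : ℕ, UniformCauchySeqOn
      (fun j x => iteratedFDeriv ℝ l (fs j) x) atTop (Metric.closedBall 0 (R : ℝ)) := by
    intro l hl R
    rcases Nat.eq_zero_or_pos l with hl0 | hl1
    · subst hl0
      refine uc_of_key _ ?_ R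
      intro n j h x hx
      have := hkey0 n j h x hx
      calc dist (iteratedFDeriv ℝ 0 (fs n) x) (iteratedFDeriv ℝ 0 (fs j) x)
          = ‖iteratedFDeriv ℝ 0 (fs n) x - iteratedFDeriv ℝ 0 (fs j) x‖ := dist_eq_norm _ _
        _ = ‖iteratedFDeriv ℝ 0 (fs n - fs j) x‖ := by
            rw [iteratedFDeriv_sub_apply' (contDiff_nat_of_le (hfsm n) (Nat.zero_le k))
              (contDiff_nat_of_le (hfsm j) (Nat.zero_le k))]
        _ = ‖(fs n - fs j) x‖ := norm_iteratedFDeriv_zero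
        _ = dist (fs n x) (fs j x) := by rw [dist_eq_norm]; rfl
        _ ≤ (2⁻¹ : ℝ) ^ n := this
    · exact uc_of_key _ (hkeyl l hl1 hl) R
  -- the limit map
  obtain ⟨g, hgC, hgpt, hgder⟩ := exists_ck_limit k fs hfsm hUCval hUCder
  -- the limit has locally finite Hölder seminorm
  have hHol : ∀ Kc : Set (Euc m), IsCompact Kc →
      holderSemi α Kc (iteratedFDeriv ℝ k g) < ⊤ := by
    intro Kc hKc
    obtain ⟨r, hr⟩ := hKc.isBounded.subset_closedBall 0
    set n : ℕ := ⌈max r 0⌉₊ with hn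
    have hsub : Kc ⊆ Metric.closedBall (0 : Euc m) (n : ℝ) :=
      hr.trans (Metric.closedBall_subset_closedBall ((le_max_left r 0).trans (Nat.le_ceil _)))
    have hsplit : holderSemi α Kc (iteratedFDeriv ℝ k g) ≤
        holderSemi α Kc (iteratedFDeriv ℝ k (fs n))
          + holderSemi α Kc (iteratedFDeriv ℝ k (g - fs n)) := by
      refine holderSemi_add_le fun x _ => ?_
      have hgg : fs n + (g - fs n) = g := by
        funext y; simp
      conv_lhs => rw [← hgg]
      rw [iteratedFDeriv_add_apply (contDiff_nat_of_le (hfsm n) le_rfl).contDiffAt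
        (contDiff_nat_of_le (show ContDiff ℝ (k : ℕ∞) (g - fs n) from hgC.sub (hfsm n)) le_rfl).contDiffAt]
    have hB : holderSemi α Kc (iteratedFDeriv ℝ k (g - fs n))
        ≤ ENNReal.ofReal ((2⁻¹ : ℝ) ^ n) := by
      refine holderSemi_le_of_tendsto (F' := fun j => iteratedFDeriv ℝ k (fs j - fs n))
        (fun x _ => ?_) ?_
      · have base : Tendsto (fun j => iteratedFDeriv ℝ k (fs j) x
            - iteratedFDeriv ℝ k (fs n) x) atTop
            (𝓝 (iteratedFDeriv ℝ k g x - iteratedFDeriv ℝ k (fs n) x)) :=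
          (hgder k le_rfl x).sub tendsto_const_nhds
        have heq : ∀ j, iteratedFDeriv ℝ k (fs j) x - iteratedFDeriv ℝ k (fs n) x
            = iteratedFDeriv ℝ k (fs j - fs n) x := fun j =>
          (iteratedFDeriv_sub_apply' (contDiff_nat_of_le (hfsm j) le_rfl)
            (contDiff_nat_of_le (hfsm n) le_rfl) x).symm
        have heq2 : iteratedFDeriv ℝ k g x - iteratedFDeriv ℝ k (fs n) x
            = iteratedFDeriv ℝ k (g - fs n) x :=
          (iteratedFDeriv_sub_apply' (contDiff_nat_of_le hgC le_rfl)
            (contDiff_nat_of_le (hfsm n) le_rfl) x).symm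
        rw [← heq2]
        exact base.congr heq
      · filter_upwards [eventually_ge_atTop n] with j hj
        have h1 : holderSemi α Kc (iteratedFDeriv ℝ k (fs j - fs n))
            = holderSemi α Kc (iteratedFDeriv ℝ k (fs n - fs j)) := by
          refine holderSemi_congr_neg fun x _ => ?_
          rw [iteratedFDeriv_sub_apply' (contDiff_nat_of_le (hfsm j) le_rfl)
            (contDiff_nat_of_le (hfsm n) le_rfl),
            iteratedFDeriv_sub_apply' (contDiff_nat_of_le (hfsm n) le_rfl)
            (contDiff_nat_of_le (hfsm j) le_rfl), neg_sub]
        rw [h1]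
        calc holderSemi α Kc (iteratedFDeriv ℝ k (fs n - fs j))
            ≤ holderSemi α (Metric.closedBall 0 (n:ℝ)) (iteratedFDeriv ℝ k (fs n - fs j)) :=
              holderSemi_mono hsub
          _ ≤ ckHolderNorm m d k α (Metric.closedBall 0 (n:ℝ)) (fs n - fs j) :=
              holderSemi_le_ckHolderNorm
          _ ≤ ENNReal.ofReal ((2⁻¹ : ℝ) ^ n) := hCauchyN n j hj
    have hA : holderSemi α Kc (iteratedFDeriv ℝ k (fs n)) < ⊤ := ((σ n).f).2.2 Kc hKc
    exact lt_of_le_of_lt hsplit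
      (ENNReal.add_lt_top.2 ⟨hA, lt_of_le_of_lt hB ENNReal.ofReal_lt_top⟩)
  set gX : CkHolderMap m d k α := ⟨g, hgC, hHol⟩ with hgXdef
  -- gX belongs to every enlarged stage set
  have hfinal : ∀ n, gX ∈ (σ n).Scl := by
    intro n t
    refine ckHolderNorm_le_of_tendsto (φ := fun j => ((σ n).f).1 - fs j) hk ?_ ?_ ?_
    · intro x _
      exact (tendsto_const_nhds.sub (hgpt x))
    · intro l hl1 hl2 x _
      have base : Tendsto (fun j => iteratedFDeriv ℝ l (fs n) x
          - iteratedFDeriv ℝ l (fs j) x) atTop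
          (𝓝 (iteratedFDeriv ℝ l (fs n) x - iteratedFDeriv ℝ l g x)) :=
        tendsto_const_nhds.sub (hgder l hl2 x)
      have heq : ∀ j, iteratedFDeriv ℝ l (fs n) x - iteratedFDeriv ℝ l (fs j) x
          = iteratedFDeriv ℝ l (fs n - fs j) x := fun j =>
        (iteratedFDeriv_sub_apply' (contDiff_nat_of_le (hfsm n) hl2)
          (contDiff_nat_of_le (hfsm j) hl2) x).symm
      have heq2 : iteratedFDeriv ℝ l (fs n) x - iteratedFDeriv ℝ l g x
          = iteratedFDeriv ℝ l (fs n - g) x :=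
        (iteratedFDeriv_sub_apply' (contDiff_nat_of_le (hfsm n) hl2)
          (contDiff_nat_of_le hgC hl2) x).symm
      rw [← heq2]
      exact base.congr heq
    · filter_upwards [eventually_ge_atTop n] with j hj
      exact hmem n j hj t
  -- conclusion
  have hgW : gX ∈ W := (hP₀Scl (by rw [← hσ0]; exact hfinal 0)).1
  have hgU : ∀ n, gX ∈ U n := by
    intro n
    cases n with
    | zero => exact (hP₀Scl (by rw [← hσ0]; exact hfinal 0)).2
    | succ n => exact (hScl n (hfinal (n + 1))).2
  exact ⟨gX, hgW, mem_iInter.2 hgU⟩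
end
end

section
/- Let α ∈ (0,1], U ⊆ ℝ^m open, φ : U → ℝ^m a C^∞ diffeomorphism of U onto an open subset of ℝ^m, K ⊆ U compact, V ⊆ ℝ^d open, ψ : V → ℝ^d of class C^∞, and L ⊆ V compact and convex. Then for every B > 0 there exists κ > 0, depending only on α, B, φ, K, ψ and L, such that for all continuous maps g, g' : U → ℝ^d with g(K) ⊆ L, g'(K) ⊆ L, [g]_{α,K} ≤ B and [g']_{α,K} ≤ B: [ψ∘g∘φ^{-1} − ψ∘g'∘φ^{-1}]_{α, φ(K)} ≤ κ · ( ‖g − g'‖_{C⁰(K)} + [g − g']_{α,K} ). -/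
open Set
open scoped ENNReal

noncomputable section

/-- The `C^k`-seminorm of `h` over `A`, computed with derivatives taken within the (open)
set `s`: `[h]_{C^k,A} = max_{1≤j≤k} sup_{x∈A} ‖D^j h(x)‖`, valued in `[0,∞]`. -/
noncomputable def ckSemiOn {E F : Type*} [NormedAddCommGroup E] [NormedSpace ℝ E]
    [NormedAddCommGroup F] [NormedSpace ℝ F]
    (k : ℕ) (s A : Set E) (h : E → F) : ℝ≥0∞ :=
  ⨆ j ∈ Finset.Icc 1 k, ⨆ (x) (_ : x ∈ A),
    ENNReal.ofReal ‖iteratedFDerivWithin ℝ j h s x‖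

private lemma lipschitzOn_of_compact {E F : Type*} [NormedAddCommGroup E] [NormedAddCommGroup F]
    {f : E → F} {s : Set E} (hs : IsCompact s)
    (hloc : ∀ x ∈ s, ∃ C : NNReal, ∃ t ∈ nhds x, LipschitzOnWith C f t) :
    ∃ C : ℝ, 0 ≤ C ∧ ∀ x ∈ s, ∀ y ∈ s, ‖f x - f y‖ ≤ C * ‖x - y‖ := by
  rcases s.eq_empty_or_nonempty with rfl | hne
  · exact ⟨0, le_rfl, by simp⟩
  choose Cl tl htl hlip using hloc
  have hball : ∀ x (hx : x ∈ s), ∃ ε : ℝ, 0 < ε ∧ Metric.ball x (2 * ε) ⊆ tl x hx := by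
    intro x hx
    rcases Metric.mem_nhds_iff.1 (htl x hx) with ⟨ε, hε, hsub⟩
    exact ⟨ε / 2, by linarith, by rw [show 2 * (ε / 2) = ε by ring]; exact hsub⟩
  choose ε hε hsub using hball
  obtain ⟨T, hT⟩ := hs.elim_nhds_subcover' (fun x hx => Metric.ball x (ε x hx))
    (fun x hx => Metric.ball_mem_nhds x (hε x hx))
  have hTne : T.Nonempty := by
    obtain ⟨x0, hx0⟩ := hne
    rcases Set.mem_iUnion₂.1 (hT hx0) with ⟨i, hi, _⟩
    exact ⟨i, hi⟩
  set δ : ℝ := T.inf' hTne fun i => ε i i.2 with hδdef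
  have hδ : 0 < δ := (Finset.lt_inf'_iff hTne).2 fun i _ => hε i i.2
  set CM : ℝ := T.sup' hTne fun i => (Cl i i.2 : ℝ) with hCMdef
  have hcont : ContinuousOn f s := fun x hx =>
    ((hlip x hx).continuousOn.continuousAt (htl x hx)).continuousWithinAt
  obtain ⟨M, hM⟩ := hs.exists_bound_of_continuousOn hcont
  have hM0 : 0 ≤ M := le_trans (norm_nonneg _) (hM _ hne.choose_spec)
  refine ⟨max CM (2 * M / δ), le_max_of_le_right (by positivity), ?_⟩
  intro x hx y hy
  rcases lt_or_ge (dist x y) δ with hlt | hge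
  · rcases Set.mem_iUnion₂.1 (hT hx) with ⟨i, hi, hxb⟩
    have hδi : δ ≤ ε i i.2 := Finset.inf'_le _ hi
    have hxi : x ∈ Metric.ball (i : E) (2 * ε i i.2) := by
      rw [Metric.mem_ball] at hxb ⊢; linarith [hε i i.2]
    have hyi : y ∈ Metric.ball (i : E) (2 * ε i i.2) := by
      rw [Metric.mem_ball] at hxb ⊢
      have h3 : dist y (i : E) ≤ dist y x + dist x i := dist_triangle _ _ _
      rw [dist_comm y x] at h3; linarith
    have h2 := (hlip i i.2).dist_le_mul x (hsub i i.2 hxi) y (hsub i i.2 hyi)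
    rw [dist_eq_norm, dist_eq_norm] at h2
    calc ‖f x - f y‖ ≤ (Cl i i.2 : ℝ) * ‖x - y‖ := h2
      _ ≤ max CM (2 * M / δ) * ‖x - y‖ := by
          refine mul_le_mul_of_nonneg_right ?_ (norm_nonneg _)
          exact le_max_of_le_left (Finset.le_sup' (fun i : s => (Cl i i.2 : ℝ)) hi)
  · have h1 : ‖f x - f y‖ ≤ 2 * M :=
      calc ‖f x - f y‖ ≤ ‖f x‖ + ‖f y‖ := norm_sub_le _ _
        _ ≤ M + M := add_le_add (hM x hx) (hM y hy)
        _ = 2 * M := by ring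
    have h2 : (2 * M / δ) * δ ≤ (2 * M / δ) * ‖x - y‖ := by
      refine mul_le_mul_of_nonneg_left ?_ (by positivity)
      rwa [← dist_eq_norm]
    calc ‖f x - f y‖ ≤ 2 * M := h1
      _ = (2 * M / δ) * δ := by field_simp
      _ ≤ (2 * M / δ) * ‖x - y‖ := h2
      _ ≤ max CM (2 * M / δ) * ‖x - y‖ :=
          mul_le_mul_of_nonneg_right (le_max_right _ _) (norm_nonneg _)

private lemma holderSemi_pair {E F : Type*} [NormedAddCommGroup E] [NormedAddCommGroup F]
    {α : ℝ} {A : Set E} (f : E → F) {x y : E} (hx : x ∈ A) (hy : y ∈ A) (hxy : x ≠ y) :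
    ENNReal.ofReal (‖f x - f y‖ / ‖x - y‖ ^ α) ≤ holderSemi α A f := by
  unfold holderSemi
  exact le_iSup_of_le x (le_iSup_of_le hx (le_iSup_of_le y (le_iSup_of_le hy
    (le_iSup_of_le hxy le_rfl))))

private lemma norm_le_of_holderSemi_le {E F : Type*} [NormedAddCommGroup E]
    [NormedAddCommGroup F] {α : ℝ} {A : Set E} {f : E → F} {x y : E} (hx : x ∈ A) (hy : y ∈ A)
    {B : ℝ} (hB : 0 ≤ B) (h : holderSemi α A f ≤ ENNReal.ofReal B) :
    ‖f x - f y‖ ≤ B * ‖x - y‖ ^ α := by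
  by_cases hxy : x = y
  · subst hxy
    calc ‖f x - f x‖ = 0 := by simp
      _ ≤ B * ‖x - x‖ ^ α := mul_nonneg hB (Real.rpow_nonneg (norm_nonneg _) _)
  · have h1 := (holderSemi_pair f hx hy hxy (α := α)).trans h
    rw [ENNReal.ofReal_le_ofReal_iff hB] at h1
    have hpow : 0 < ‖x - y‖ ^ α :=
      Real.rpow_pos_of_pos (norm_pos_iff.2 (sub_ne_zero.2 hxy)) α
    exact (div_le_iff₀ hpow).1 h1

/-- The key two-point estimate for a `C²`-type map `ψ` on a convex set `L`. -/
private lemma key_estimate {d : ℕ} {V : Set (EuclideanSpace ℝ (Fin d))} (hV : IsOpen V)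
    {ψ : EuclideanSpace ℝ (Fin d) → EuclideanSpace ℝ (Fin d)}
    {L : Set (EuclideanSpace ℝ (Fin d))} (hLconv : Convex ℝ L) (hLV : L ⊆ V)
    (hψdiff : ∀ z ∈ L, DifferentiableAt ℝ ψ z)
    {C₁ C₃ : ℝ} (hC₃0 : 0 ≤ C₃)
    (hC₁ : ∀ z ∈ L, ‖fderiv ℝ ψ z‖ ≤ C₁)
    (hDlip : ∀ u ∈ L, ∀ v ∈ L, ‖fderiv ℝ ψ u - fderiv ℝ ψ v‖ ≤ C₃ * ‖u - v‖) :
    ∀ p ∈ L, ∀ q ∈ L, ∀ p' ∈ L, ∀ q' ∈ L,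
      ‖(ψ p - ψ q) - (ψ p' - ψ q')‖ ≤
        C₁ * ‖(p - q) - (p' - q')‖ + C₃ * ((‖p - p'‖ + ‖q - q'‖) * ‖p' - q'‖) := by
  intro p hp q hq p' hp' q' hq'
  set c : ℝ → EuclideanSpace ℝ (Fin d) := fun t => (1 - t) • q + t • p with hcdef
  set c' : ℝ → EuclideanSpace ℝ (Fin d) := fun t => (1 - t) • q' + t • p' with hc'def
  have hcmem : ∀ t ∈ Icc (0 : ℝ) 1, c t ∈ L := fun t ht =>
    hLconv hq hp (by linarith [ht.2]) ht.1 (by ring)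
  have hc'mem : ∀ t ∈ Icc (0 : ℝ) 1, c' t ∈ L := fun t ht =>
    hLconv hq' hp' (by linarith [ht.2]) ht.1 (by ring)
  have hcd : ∀ t : ℝ, HasDerivAt c (p - q) t := by
    intro t
    have h1 : HasDerivAt (fun t : ℝ => (1 - t) • q) (((0:ℝ) - 1) • q) t :=
      ((hasDerivAt_const t (1 : ℝ)).sub (hasDerivAt_id t)).smul_const q
    have h2 : HasDerivAt (fun t : ℝ => t • p) ((1 : ℝ) • p) t := (hasDerivAt_id t).smul_const p
    have h3 := h1.add h2
    refine HasDerivAt.congr_deriv h3 ?_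
    rw [sub_smul, zero_smul, one_smul, one_smul]; abel
  have hc'd : ∀ t : ℝ, HasDerivAt c' (p' - q') t := by
    intro t
    have h1 : HasDerivAt (fun t : ℝ => (1 - t) • q') (((0:ℝ) - 1) • q') t :=
      ((hasDerivAt_const t (1 : ℝ)).sub (hasDerivAt_id t)).smul_const q'
    have h2 : HasDerivAt (fun t : ℝ => t • p') ((1 : ℝ) • p') t := (hasDerivAt_id t).smul_const p'
    have h3 := h1.add h2
    refine HasDerivAt.congr_deriv h3 ?_
    rw [sub_smul, zero_smul, one_smul, one_smul]; abel
  set h : ℝ → EuclideanSpace ℝ (Fin d) := fun t => ψ (c t) - ψ (c' t) with hhdef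
  set h' : ℝ → EuclideanSpace ℝ (Fin d) :=
    fun t => fderiv ℝ ψ (c t) (p - q) - fderiv ℝ ψ (c' t) (p' - q') with hh'def
  have hder : ∀ t ∈ Icc (0 : ℝ) 1, HasDerivWithinAt h (h' t) (Icc (0 : ℝ) 1) t := by
    intro t ht
    have d1 : HasDerivAt (fun t => ψ (c t)) (fderiv ℝ ψ (c t) (p - q)) t :=
      (hψdiff _ (hcmem t ht)).hasFDerivAt.comp_hasDerivAt t (hcd t)
    have d2 : HasDerivAt (fun t => ψ (c' t)) (fderiv ℝ ψ (c' t) (p' - q')) t :=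
      (hψdiff _ (hc'mem t ht)).hasFDerivAt.comp_hasDerivAt t (hc'd t)
    exact (d1.sub d2).hasDerivWithinAt
  have hbound : ∀ t ∈ Ico (0 : ℝ) 1,
      ‖h' t‖ ≤ C₁ * ‖(p - q) - (p' - q')‖ + C₃ * ((‖p - p'‖ + ‖q - q'‖) * ‖p' - q'‖) := by
    intro t ht
    have ht' : t ∈ Icc (0 : ℝ) 1 := ⟨ht.1, ht.2.le⟩
    have hA : ‖fderiv ℝ ψ (c t)‖ ≤ C₁ := hC₁ _ (hcmem t ht')
    have hAB : ‖fderiv ℝ ψ (c t) - fderiv ℝ ψ (c' t)‖ ≤ C₃ * ‖c t - c' t‖ :=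
      hDlip _ (hcmem t ht') _ (hc'mem t ht')
    have hcc : ‖c t - c' t‖ ≤ ‖p - p'‖ + ‖q - q'‖ := by
      have heq : c t - c' t = (1 - t) • (q - q') + t • (p - p') := by
        simp only [hcdef, hc'def]
        module
      rw [heq]
      calc ‖(1 - t) • (q - q') + t • (p - p')‖
          ≤ ‖(1 - t) • (q - q')‖ + ‖t • (p - p')‖ := norm_add_le _ _
        _ = |1 - t| * ‖q - q'‖ + |t| * ‖p - p'‖ := by
            rw [norm_smul, norm_smul, Real.norm_eq_abs, Real.norm_eq_abs]
        _ ≤ 1 * ‖q - q'‖ + 1 * ‖p - p'‖ := by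
            refine add_le_add (mul_le_mul_of_nonneg_right ?_ (norm_nonneg _))
              (mul_le_mul_of_nonneg_right ?_ (norm_nonneg _))
            · rw [abs_le]; constructor <;> linarith [ht.1, ht.2]
            · rw [abs_le]; constructor <;> linarith [ht.1, ht.2]
        _ = ‖p - p'‖ + ‖q - q'‖ := by ring
    have hsplit : h' t = fderiv ℝ ψ (c t) ((p - q) - (p' - q')) +
        (fderiv ℝ ψ (c t) - fderiv ℝ ψ (c' t)) (p' - q') := by
      simp only [hh'def, map_sub, ContinuousLinearMap.sub_apply]
      abel
    rw [hsplit]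
    calc ‖fderiv ℝ ψ (c t) ((p - q) - (p' - q')) +
          (fderiv ℝ ψ (c t) - fderiv ℝ ψ (c' t)) (p' - q')‖
        ≤ ‖fderiv ℝ ψ (c t) ((p - q) - (p' - q'))‖ +
          ‖(fderiv ℝ ψ (c t) - fderiv ℝ ψ (c' t)) (p' - q')‖ := norm_add_le _ _
      _ ≤ C₁ * ‖(p - q) - (p' - q')‖ + (C₃ * (‖p - p'‖ + ‖q - q'‖)) * ‖p' - q'‖ := by
          refine add_le_add ?_ ?_
          · exact le_trans (ContinuousLinearMap.le_opNorm _ _)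
              (mul_le_mul_of_nonneg_right hA (norm_nonneg _))
          · refine le_trans (ContinuousLinearMap.le_opNorm _ _) ?_
            refine mul_le_mul_of_nonneg_right ?_ (norm_nonneg _)
            exact le_trans hAB (mul_le_mul_of_nonneg_left hcc hC₃0)
      _ = C₁ * ‖(p - q) - (p' - q')‖ + C₃ * ((‖p - p'‖ + ‖q - q'‖) * ‖p' - q'‖) := by ring
  have hmain := norm_image_sub_le_of_norm_deriv_le_segment_01' hder hbound
  have h1 : h 1 = ψ p - ψ p' := by simp [hhdef, hcdef, hc'def]
  have h0 : h 0 = ψ q - ψ q' := by simp [hhdef, hcdef, hc'def]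
  have heq : (ψ p - ψ q) - (ψ p' - ψ q') = h 1 - h 0 := by rw [h1, h0]; abel
  rw [heq]
  exact hmain

/-- let `φ` be a `C^∞` diffeomorphism of the open set `U ⊆ ℝ^m` onto its
(open) image with smooth inverse `φinv`, `K ⊆ U` compact, `ψ : V → ℝ^d` of class `C^∞` on
the open set `V ⊆ ℝ^d`, and `L ⊆ V` compact and convex.  For every `B > 0` there is
`κ > 0` (depending only on `α`, `B`, `φ`, `K`, `ψ`, `L`) such that for all continuous
`g, g'` on `U` with `g(K), g'(K) ⊆ L` and `α`-Hölder seminorms at most `B` on `K`: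
`[ψ∘g∘φ⁻¹ − ψ∘g'∘φ⁻¹]_{α,φ(K)} ≤ κ ( ‖g − g'‖_{C⁰(K)} + [g − g']_{α,K} )`. -/
theorem statement13 (m d : ℕ) (α : ℝ) (hα : α ∈ Set.Ioc (0:ℝ) 1)
    (U : Set (Euc m)) (hU : IsOpen U)
    (φ φinv : Euc m → Euc m)
    (hφ : ContDiffOn ℝ (⊤ : ℕ∞) φ U)
    (hImg : IsOpen (φ '' U))
    (hφinv : ContDiffOn ℝ (⊤ : ℕ∞) φinv (φ '' U))
    (hleft : ∀ x ∈ U, φinv (φ x) = x)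
    (K : Set (Euc m)) (hK : IsCompact K) (hKU : K ⊆ U)
    (V : Set (Euc d)) (hV : IsOpen V)
    (ψ : Euc d → Euc d) (hψ : ContDiffOn ℝ (⊤ : ℕ∞) ψ V)
    (L : Set (Euc d)) (hL : IsCompact L) (hLconv : Convex ℝ L) (hLV : L ⊆ V) :
    ∀ B : ℝ, 0 < B → ∃ κ : ℝ, 0 < κ ∧
      ∀ g g' : Euc m → Euc d, ContinuousOn g U → ContinuousOn g' U →
        g '' K ⊆ L → g' '' K ⊆ L →
        holderSemi α K g ≤ ENNReal.ofReal B → holderSemi α K g' ≤ ENNReal.ofReal B →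
        holderSemi α (φ '' K) (ψ ∘ g ∘ φinv - ψ ∘ g' ∘ φinv)
          ≤ ENNReal.ofReal κ * (supNormOn K (g - g') + holderSemi α K (g - g')) := by
  intro B hB
  have hone : (1 : WithTop ℕ∞) ≤ ((⊤ : ℕ∞) : WithTop ℕ∞) := by exact_mod_cast le_top
  -- differentiability of ψ on L
  have hψdiff : ∀ z ∈ L, DifferentiableAt ℝ ψ z := fun z hz =>
    (hψ.contDiffAt (hV.mem_nhds (hLV hz))).differentiableAt (by simp)
  -- first derivative bound C₁
  obtain ⟨C₁0, hC₁0⟩ := hL.exists_bound_of_continuousOn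
    ((hψ.continuousOn_fderiv_of_isOpen hV hone).mono hLV)
  set C₁ : ℝ := max C₁0 0 with hC₁def
  have hC₁nn : 0 ≤ C₁ := le_max_right _ _
  have hC₁ : ∀ z ∈ L, ‖fderiv ℝ ψ z‖ ≤ C₁ := fun z hz => (hC₁0 z hz).trans (le_max_left _ _)
  -- second derivative bound C₃ and Lipschitz estimate for the derivative
  have hψ1 : ContDiffOn ℝ (⊤ : ℕ∞) (fderiv ℝ ψ) V := hψ.fderiv_of_isOpen hV le_rfl
  obtain ⟨C₃0, hC₃0⟩ := hL.exists_bound_of_continuousOn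
    ((hψ1.continuousOn_fderiv_of_isOpen hV hone).mono hLV)
  set C₃ : ℝ := max C₃0 0 with hC₃def
  have hC₃nn : 0 ≤ C₃ := le_max_right _ _
  have hDlip : ∀ u ∈ L, ∀ v ∈ L, ‖fderiv ℝ ψ u - fderiv ℝ ψ v‖ ≤ C₃ * ‖u - v‖ := by
    intro u hu v hv
    exact hLconv.norm_image_sub_le_of_norm_fderiv_le
      (fun z hz => (hψ1.contDiffAt (hV.mem_nhds (hLV hz))).differentiableAt (by simp))
      (fun z hz => (hC₃0 z hz).trans (le_max_left _ _)) hv hu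
  have key := key_estimate hV hLconv hLV hψdiff hC₃nn hC₁ hDlip
  -- Lipschitz bound for φinv on φ '' K
  have hφKcpt : IsCompact (φ '' K) := hK.image_of_continuousOn (hφ.continuousOn.mono hKU)
  obtain ⟨C₂, hC₂0, hC₂⟩ := lipschitzOn_of_compact hφKcpt (fun z hz =>
    ((hφinv.contDiffAt (hImg.mem_nhds (Set.image_mono hKU hz))).of_le hone).exists_lipschitzOnWith)
  -- the constant
  set κ : ℝ := C₂ ^ α * (C₁ + 2 * B * C₃) + 1 with hκdef
  have hCq0 : 0 ≤ C₂ ^ α := Real.rpow_nonneg hC₂0 α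
  have hκpos : 0 < κ := by
    have : 0 ≤ C₂ ^ α * (C₁ + 2 * B * C₃) :=
      mul_nonneg hCq0 (by positivity)
    linarith
  refine ⟨κ, hκpos, ?_⟩
  intro g g' hg hg' hgL hg'L hgB hg'B
  set Sinf := supNormOn K (g - g') with hSdef
  set Hinf := holderSemi α K (g - g') with hHdef
  by_cases hfin : Sinf ≠ ⊤ ∧ Hinf ≠ ⊤
  swap
  · rw [not_and_or, not_ne_iff, not_ne_iff] at hfin
    have htop : Sinf + Hinf = ⊤ := by
      rcases hfin with h | h <;> simp [h]
    rw [htop, ENNReal.mul_top (ne_of_gt (ENNReal.ofReal_pos.2 hκpos))]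
    exact le_top
  obtain ⟨hSfin, hHfin⟩ := hfin
  set S : ℝ := Sinf.toReal with hSrdef
  set H : ℝ := Hinf.toReal with hHrdef
  have hS0 : 0 ≤ S := ENNReal.toReal_nonneg
  have hH0 : 0 ≤ H := ENNReal.toReal_nonneg
  -- real bounds
  have hSb : ∀ b ∈ K, ‖g b - g' b‖ ≤ S := by
    intro b hb
    have h1 : ENNReal.ofReal ‖(g - g') b‖ ≤ Sinf := by
      rw [hSdef]; unfold supNormOn
      exact le_iSup_of_le b (le_iSup_of_le hb le_rfl)
    have h2 := (ENNReal.ofReal_le_iff_le_toReal hSfin).1 h1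
    simpa [Pi.sub_apply] using h2
  have hHb : ∀ a ∈ K, ∀ b ∈ K, ‖(g a - g' a) - (g b - g' b)‖ ≤ H * ‖a - b‖ ^ α := by
    intro a ha b hb
    have h1 : holderSemi α K (g - g') ≤ ENNReal.ofReal H := by
      rw [hHrdef, ENNReal.ofReal_toReal hHfin]
    have := norm_le_of_holderSemi_le ha hb hH0 h1
    simpa [Pi.sub_apply] using this
  have hgb : ∀ a ∈ K, ∀ b ∈ K, ‖g a - g b‖ ≤ B * ‖a - b‖ ^ α := fun a ha b hb =>
    norm_le_of_holderSemi_le ha hb hB.le hgB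
  have hg'b : ∀ a ∈ K, ∀ b ∈ K, ‖g' a - g' b‖ ≤ B * ‖a - b‖ ^ α := fun a ha b hb =>
    norm_le_of_holderSemi_le ha hb hB.le hg'B
  -- reduce RHS
  have hRHS : ENNReal.ofReal (κ * (S + H)) ≤ ENNReal.ofReal κ * (Sinf + Hinf) := by
    rw [ENNReal.ofReal_mul hκpos.le, ENNReal.ofReal_add hS0 hH0,
      hSrdef, hHrdef, ENNReal.ofReal_toReal hSfin, ENNReal.ofReal_toReal hHfin]
  refine le_trans ?_ hRHS
  unfold holderSemi
  refine iSup_le fun x => iSup_le fun hx => iSup_le fun y => iSup_le fun hy =>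
    iSup_le fun hxy => ENNReal.ofReal_le_ofReal ?_
  obtain ⟨a, ha, hax⟩ := hx
  obtain ⟨b, hb, hby⟩ := hy
  have hφa : φinv x = a := by rw [← hax]; exact hleft a (hKU ha)
  have hφb : φinv y = b := by rw [← hby]; exact hleft b (hKU hb)
  have hpa : g a ∈ L := hgL ⟨a, ha, rfl⟩
  have hqa : g' a ∈ L := hg'L ⟨a, ha, rfl⟩
  have hpb : g b ∈ L := hgL ⟨b, hb, rfl⟩
  have hqb : g' b ∈ L := hg'L ⟨b, hb, rfl⟩
  have hC2ab : ‖a - b‖ ≤ C₂ * ‖x - y‖ := by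
    have := hC₂ x ⟨a, ha, hax⟩ y ⟨b, hb, hby⟩
    rwa [hφa, hφb] at this
  have hpow : ‖a - b‖ ^ α ≤ C₂ ^ α * ‖x - y‖ ^ α := by
    calc ‖a - b‖ ^ α ≤ (C₂ * ‖x - y‖) ^ α :=
          Real.rpow_le_rpow (norm_nonneg _) hC2ab hα.1.le
      _ = C₂ ^ α * ‖x - y‖ ^ α := Real.mul_rpow hC₂0 (norm_nonneg _)
  have hm0 : 0 ≤ ‖a - b‖ ^ α := Real.rpow_nonneg (norm_nonneg _) α
  have hn0 : 0 ≤ ‖x - y‖ ^ α := Real.rpow_nonneg (norm_nonneg _) α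
  have hnpos : 0 < ‖x - y‖ ^ α :=
    Real.rpow_pos_of_pos (norm_pos_iff.2 (sub_ne_zero.2 hxy)) α
  have ekey := key (g a) hpa (g' a) hqa (g b) hpb (g' b) hqb
  have hQ : ‖ψ (g a) - ψ (g' a) - (ψ (g b) - ψ (g' b))‖ ≤ κ * (S + H) * ‖x - y‖ ^ α := by
    have step1 : ‖ψ (g a) - ψ (g' a) - (ψ (g b) - ψ (g' b))‖ ≤
        C₁ * (H * ‖a - b‖ ^ α) + C₃ * ((B * ‖a - b‖ ^ α + B * ‖a - b‖ ^ α) * S) := by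
      refine le_trans ekey (add_le_add (mul_le_mul_of_nonneg_left (hHb a ha b hb) hC₁nn)
        (mul_le_mul_of_nonneg_left ?_ hC₃nn))
      refine mul_le_mul (add_le_add (hgb a ha b hb) (hg'b a ha b hb)) (hSb b hb)
        (norm_nonneg _) (by positivity)
    have step2 : C₁ * (H * ‖a - b‖ ^ α) + C₃ * ((B * ‖a - b‖ ^ α + B * ‖a - b‖ ^ α) * S)
        = (C₁ * H + 2 * B * C₃ * S) * ‖a - b‖ ^ α := by ring
    have step3 : (C₁ * H + 2 * B * C₃ * S) * ‖a - b‖ ^ α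
        ≤ (C₁ * H + 2 * B * C₃ * S) * (C₂ ^ α * ‖x - y‖ ^ α) := by
      refine mul_le_mul_of_nonneg_left hpow ?_
      positivity
    have step4 : C₁ * H + 2 * B * C₃ * S ≤ (C₁ + 2 * B * C₃) * (S + H) := by
      nlinarith [mul_nonneg hC₁nn hS0, mul_nonneg (by positivity : (0:ℝ) ≤ 2 * B * C₃) hH0]
    have hSH0 : 0 ≤ (S + H) * ‖x - y‖ ^ α := mul_nonneg (add_nonneg hS0 hH0) hn0
    calc ‖ψ (g a) - ψ (g' a) - (ψ (g b) - ψ (g' b))‖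
        ≤ (C₁ * H + 2 * B * C₃ * S) * (C₂ ^ α * ‖x - y‖ ^ α) := by
          rw [← step2] at step3; exact step1.trans step3
      _ ≤ ((C₁ + 2 * B * C₃) * (S + H)) * (C₂ ^ α * ‖x - y‖ ^ α) :=
          mul_le_mul_of_nonneg_right step4 (by positivity)
      _ = (C₂ ^ α * (C₁ + 2 * B * C₃)) * ((S + H) * ‖x - y‖ ^ α) := by ring
      _ ≤ (C₂ ^ α * (C₁ + 2 * B * C₃) + 1) * ((S + H) * ‖x - y‖ ^ α) :=
          mul_le_mul_of_nonneg_right (by linarith) hSH0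
      _ = κ * (S + H) * ‖x - y‖ ^ α := by rw [hκdef]; ring
  have hFx : (ψ ∘ g ∘ φinv - ψ ∘ g' ∘ φinv) x = ψ (g a) - ψ (g' a) := by
    simp [Pi.sub_apply, Function.comp, hφa]
  have hFy : (ψ ∘ g ∘ φinv - ψ ∘ g' ∘ φinv) y = ψ (g b) - ψ (g' b) := by
    simp [Pi.sub_apply, Function.comp, hφb]
  rw [hFx, hFy, div_le_iff₀ hnpos]
  exact hQ
end
end

section
/- Let p ∈ [1,∞), let U, U' ⊆ ℝ^m be open, let φ : U' → U be a C¹ diffeomorphism, and let K ⊆ U be compact (so φ^{-1}(K) ⊆ U' is compact). Then for all maps g, g' : U → ℝ^d of class C¹: (∫_{φ^{-1}(K)} ‖D(g∘φ)(x) − D(g'∘φ)(x)‖^p dμ(x))^{1/p} ≤ (sup_{x ∈ φ^{-1}(K)} ‖Dφ(x)‖) · (inf_{x ∈ φ^{-1}(K)} |det Dφ(x)|)^{-1/p} · (∫_K ‖Dg(y) − Dg'(y)‖^p dμ(y))^{1/p}. -/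
open Set MeasureTheory
open scoped ENNReal

noncomputable section

set_option maxHeartbeats 1000000 in
set_option synthInstance.maxHeartbeats 100000 in
/-- let `p ∈ [1,∞)`, `φ : U' → U` a `C¹` diffeomorphism between open subsets
of `ℝ^m` (with `C¹` inverse `φinv`), and `K ⊆ U` compact, `K' = φ⁻¹(K)`.  Then for all
`C¹` maps `g, g' : U → ℝ^d`:
`(∫_{K'} ‖D(g∘φ) − D(g'∘φ)‖^p dμ)^{1/p}
  ≤ (sup_{K'} ‖Dφ‖) (inf_{K'} |det Dφ|)^{−1/p} (∫_K ‖Dg − Dg'‖^p dμ)^{1/p}`,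
where `μ` is Lebesgue measure. -/
theorem statement16 (m d : ℕ) (p : ℝ) (hp : 1 ≤ p)
    (U U' : Set (Euc m)) (hU : IsOpen U) (hU' : IsOpen U')
    (φ φinv : Euc m → Euc m)
    (hφ : ContDiffOn ℝ 1 φ U') (hφinv : ContDiffOn ℝ 1 φinv U)
    (hto : ∀ x ∈ U', φ x ∈ U ∧ φinv (φ x) = x)
    (hfrom : ∀ y ∈ U, φinv y ∈ U' ∧ φ (φinv y) = y)
    (K : Set (Euc m)) (hK : IsCompact K) (hKU : K ⊆ U)
    (K' : Set (Euc m)) (hK' : K' = U' ∩ φ ⁻¹' K)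
    (g g' : Euc m → Euc d)
    (hg : ContDiffOn ℝ 1 g U) (hg' : ContDiffOn ℝ 1 g' U) :
    (∫⁻ x in K',
        (‖fderivWithin ℝ (g ∘ φ) U' x - fderivWithin ℝ (g' ∘ φ) U' x‖₊ : ℝ≥0∞) ^ p)
        ^ (1 / p)
      ≤ ENNReal.ofReal ((⨆ x : K', ‖fderivWithin ℝ φ U' x‖)
            * (⨅ x : K', |(fderivWithin ℝ φ U' (x : Euc m)).det|) ^ (-(1 / p)))
        * (∫⁻ y in K,
            (‖fderivWithin ℝ g U y - fderivWithin ℝ g' U y‖₊ : ℝ≥0∞) ^ p) ^ (1 / p) := by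
  have hp0 : (0:ℝ) < p := lt_of_lt_of_le one_pos hp
  have hip0 : (0:ℝ) < 1 / p := by positivity
  rcases eq_empty_or_nonempty K' with hKe | hKne
  · rw [hKe, Measure.restrict_empty, lintegral_zero_measure,
      ENNReal.zero_rpow_of_pos hip0]
    exact zero_le
  have hKne' : Nonempty K' := hKne.to_subtype
  -- basic set facts
  have hK'U' : K' ⊆ U' := by rw [hK']; exact inter_subset_left
  have hmemK : ∀ x ∈ K', φ x ∈ K := by intro x hx; rw [hK'] at hx; exact hx.2
  have hK'img : K' = φinv '' K := by
    rw [hK']; ext x; constructor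
    · rintro ⟨hx1, hx2⟩; exact ⟨φ x, hx2, (hto x hx1).2⟩
    · rintro ⟨y, hy, rfl⟩
      exact ⟨(hfrom y (hKU hy)).1, by simp [mem_preimage, (hfrom y (hKU hy)).2, hy]⟩
  have hK'cpt : IsCompact K' := by
    rw [hK'img]; exact hK.image_of_continuousOn (hφinv.continuousOn.mono hKU)
  have hK'meas : MeasurableSet K' := hK'cpt.measurableSet
  have hφK' : φ '' K' = K := by
    ext y; constructor
    · rintro ⟨x, hx, rfl⟩; exact hmemK x hx
    · intro hy
      refine ⟨φinv y, ?_, (hfrom y (hKU hy)).2⟩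
      rw [hK']
      exact ⟨(hfrom y (hKU hy)).1, by simp [mem_preimage, (hfrom y (hKU hy)).2, hy]⟩
  have hinj : InjOn φ K' := by
    intro a ha b hb h
    have := (hto a (hK'U' ha)).2
    rw [h, (hto b (hK'U' hb)).2] at this
    exact this.symm
  -- differentiability
  have hφd : ∀ x ∈ U', DifferentiableAt ℝ φ x := fun x hx =>
    ((hφ.differentiableOn one_ne_zero) x hx).differentiableAt (hU'.mem_nhds hx)
  have hφinvd : ∀ y ∈ U, DifferentiableAt ℝ φinv y := fun y hy =>
    ((hφinv.differentiableOn one_ne_zero) y hy).differentiableAt (hU.mem_nhds hy)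
  have hgd : ∀ y ∈ U, DifferentiableAt ℝ g y := fun y hy =>
    ((hg.differentiableOn one_ne_zero) y hy).differentiableAt (hU.mem_nhds hy)
  have hg'd : ∀ y ∈ U, DifferentiableAt ℝ g' y := fun y hy =>
    ((hg'.differentiableOn one_ne_zero) y hy).differentiableAt (hU.mem_nhds hy)
  set A : Euc m → Euc m →L[ℝ] Euc m := fun x => fderivWithin ℝ φ U' x with hA
  set F : Euc m → Euc m →L[ℝ] Euc d :=
    fun y => fderivWithin ℝ g U y - fderivWithin ℝ g' U y with hF
  have hAeq : ∀ x ∈ U', A x = fderiv ℝ φ x := fun x hx => fderivWithin_of_isOpen hU' hx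
  -- chain rule pointwise
  have hchain : ∀ x ∈ K',
      fderivWithin ℝ (g ∘ φ) U' x - fderivWithin ℝ (g' ∘ φ) U' x = (F (φ x)).comp (A x) := by
    intro x hx
    have hx' := hK'U' hx
    have hy := (hto x hx').1
    rw [fderivWithin_of_isOpen hU' hx', fderivWithin_of_isOpen hU' hx',
      fderiv_comp x (hgd _ hy) (hφd x hx'), fderiv_comp x (hg'd _ hy) (hφd x hx'),
      ← ContinuousLinearMap.sub_comp]
    simp only [hA, hF]
    rw [fderivWithin_of_isOpen hU' hx', fderivWithin_of_isOpen hU hy,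
      fderivWithin_of_isOpen hU hy]
  -- determinant nonzero
  have hdet : ∀ x ∈ K', (A x).det ≠ 0 := by
    intro x hx
    have hx' := hK'U' hx
    have hy := (hto x hx').1
    have hev : φinv ∘ φ =ᶠ[nhds x] id := by
      filter_upwards [hU'.mem_nhds hx'] with z hz
      exact (hto z hz).2
    have h1 : fderiv ℝ (φinv ∘ φ) x = ContinuousLinearMap.id ℝ (Euc m) := by
      rw [hev.fderiv_eq, fderiv_id]
    have h2 : fderiv ℝ (φinv ∘ φ) x = (fderiv ℝ φinv (φ x)).comp (fderiv ℝ φ x) :=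
      fderiv_comp x (hφinvd _ hy) (hφd x hx')
    have h3 : (fderiv ℝ φinv (φ x)).det * (fderiv ℝ φ x).det = 1 := by
      have := h2.symm.trans h1
      have hd := congrArg ContinuousLinearMap.det this
      simpa [ContinuousLinearMap.det, ContinuousLinearMap.coe_comp, LinearMap.det_comp] using hd
    rw [hAeq x hx']
    intro h0
    rw [h0, mul_zero] at h3
    exact zero_ne_one h3
  -- continuity and sup/inf
  have hAcont : ContinuousOn A K' :=
    (hφ.continuousOn_fderivWithin hU'.uniqueDiffOn le_rfl).mono hK'U'
  obtain ⟨xM, hxM, hM⟩ := hK'cpt.exists_isMaxOn hKne hAcont.norm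
  obtain ⟨xm, hxm, hm⟩ := hK'cpt.exists_isMinOn hKne
    ((ContinuousLinearMap.continuous_det.comp_continuousOn hAcont).abs)
  set C : ℝ := ⨆ x : K', ‖A x‖ with hCdef
  set c : ℝ := ⨅ x : K', |(A x).det| with hcdef
  have hbddA : BddAbove (range fun x : K' => ‖A (x : Euc m)‖) :=
    ⟨‖A xM‖, by rintro _ ⟨x, rfl⟩; exact hM x.2⟩
  have hCle : ∀ x ∈ K', ‖A x‖ ≤ C := fun x hx => le_ciSup hbddA ⟨x, hx⟩
  have hC0 : 0 ≤ C := le_trans (norm_nonneg _) (hCle xM hxM)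
  have hcle : ∀ x ∈ K', c ≤ |(A x).det| := fun x hx =>
    ciInf_le (f := fun x : K' => |(A x).det|) ⟨0, by rintro _ ⟨x, rfl⟩; exact abs_nonneg _⟩ ⟨x, hx⟩
  have hc0 : 0 < c := by
    have h1 : |(A xm).det| ≤ c := le_ciInf fun x => hm x.2
    exact lt_of_lt_of_le (abs_pos.mpr (hdet xm hxm)) h1
  set Ce : ℝ≥0∞ := ENNReal.ofReal C with hCe
  set ce : ℝ≥0∞ := ENNReal.ofReal c with hce
  have hce0 : ce ≠ 0 := by simp [hce, ENNReal.ofReal_pos.mpr hc0, ne_of_gt]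
  have hcetop : ce ≠ ∞ := ENNReal.ofReal_ne_top
  -- pointwise bound
  have hpt : ∀ x ∈ K',
      (‖fderivWithin ℝ (g ∘ φ) U' x - fderivWithin ℝ (g' ∘ φ) U' x‖₊ : ℝ≥0∞) ^ p
        ≤ Ce ^ p * ce⁻¹ *
          (ENNReal.ofReal |(A x).det| * ((‖F (φ x)‖₊ : ℝ≥0∞)) ^ p) := by
    intro x hx
    have h1 : (‖fderivWithin ℝ (g ∘ φ) U' x - fderivWithin ℝ (g' ∘ φ) U' x‖₊ : ℝ≥0∞)
        ≤ (‖F (φ x)‖₊ : ℝ≥0∞) * Ce := by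
      rw [hchain x hx]
      calc (‖(F (φ x)).comp (A x)‖₊ : ℝ≥0∞) ≤ ((‖F (φ x)‖₊ * ‖A x‖₊ : NNReal) : ℝ≥0∞) :=
            ENNReal.coe_le_coe.mpr (ContinuousLinearMap.opNNNorm_comp_le _ _)
        _ = (‖F (φ x)‖₊ : ℝ≥0∞) * (‖A x‖₊ : ℝ≥0∞) := ENNReal.coe_mul _ _
        _ ≤ (‖F (φ x)‖₊ : ℝ≥0∞) * Ce := by
            refine mul_le_mul_right ?_ _
            rw [← enorm_eq_nnnorm, ← ofReal_norm, hCe]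
            exact ENNReal.ofReal_le_ofReal (hCle x hx)
    have h2 : (‖fderivWithin ℝ (g ∘ φ) U' x - fderivWithin ℝ (g' ∘ φ) U' x‖₊ : ℝ≥0∞) ^ p
        ≤ Ce ^ p * (‖F (φ x)‖₊ : ℝ≥0∞) ^ p := by
      rw [← ENNReal.mul_rpow_of_nonneg _ _ hp0.le]
      exact ENNReal.rpow_le_rpow (h1.trans_eq (mul_comm _ _)) hp0.le
    have h3 : (1 : ℝ≥0∞) ≤ ce⁻¹ * ENNReal.ofReal |(A x).det| := by
      rw [← ENNReal.inv_mul_cancel hce0 hcetop]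
      exact mul_le_mul_right (ENNReal.ofReal_le_ofReal (hcle x hx)) _
    calc (‖fderivWithin ℝ (g ∘ φ) U' x - fderivWithin ℝ (g' ∘ φ) U' x‖₊ : ℝ≥0∞) ^ p
        ≤ Ce ^ p * (‖F (φ x)‖₊ : ℝ≥0∞) ^ p := h2
      _ ≤ Ce ^ p * (ce⁻¹ * ENNReal.ofReal |(A x).det| * (‖F (φ x)‖₊ : ℝ≥0∞) ^ p) :=
          mul_le_mul_right (le_mul_of_one_le_left' h3) _
      _ = Ce ^ p * ce⁻¹ * (ENNReal.ofReal |(A x).det| * (‖F (φ x)‖₊ : ℝ≥0∞) ^ p) := by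
          simp only [mul_assoc]
  -- change of variables
  have hder : ∀ x ∈ K', HasFDerivWithinAt φ (A x) K' x := by
    intro x hx
    rw [hAeq x (hK'U' hx)]
    exact (hφd x (hK'U' hx)).hasFDerivAt.hasFDerivWithinAt
  have hcov : ∫⁻ y in K, ((‖F y‖₊ : ℝ≥0∞)) ^ p
      = ∫⁻ x in K', ENNReal.ofReal |(A x).det| * ((‖F (φ x)‖₊ : ℝ≥0∞)) ^ p := by
    rw [← hφK']
    exact lintegral_image_eq_lintegral_abs_det_fderiv_mul volume hK'meas hder hinj _
  -- integrate
  have hfin : Ce ^ p * ce⁻¹ ≠ ∞ :=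
    ENNReal.mul_ne_top (ENNReal.rpow_ne_top_of_nonneg hp0.le ENNReal.ofReal_ne_top)
      (ENNReal.inv_ne_top.mpr hce0)
  have hintle : (∫⁻ x in K',
      (‖fderivWithin ℝ (g ∘ φ) U' x - fderivWithin ℝ (g' ∘ φ) U' x‖₊ : ℝ≥0∞) ^ p)
      ≤ Ce ^ p * ce⁻¹ * ∫⁻ y in K, ((‖F y‖₊ : ℝ≥0∞)) ^ p := by
    rw [hcov, ← lintegral_const_mul' _ _ hfin]
    exact setLIntegral_mono' hK'meas hpt
  -- final computation
  have hconst : ENNReal.ofReal (C * c ^ (-(1 / p))) = Ce * ce ^ (-(1 / p)) := by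
    rw [ENNReal.ofReal_mul hC0, ← ENNReal.ofReal_rpow_of_pos hc0]
  calc (∫⁻ x in K',
        (‖fderivWithin ℝ (g ∘ φ) U' x - fderivWithin ℝ (g' ∘ φ) U' x‖₊ : ℝ≥0∞) ^ p) ^ (1 / p)
      ≤ (Ce ^ p * ce⁻¹ * ∫⁻ y in K, ((‖F y‖₊ : ℝ≥0∞)) ^ p) ^ (1 / p) :=
        ENNReal.rpow_le_rpow hintle hip0.le
    _ = Ce * ce ^ (-(1 / p)) * (∫⁻ y in K, ((‖F y‖₊ : ℝ≥0∞)) ^ p) ^ (1 / p) := by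
        rw [ENNReal.mul_rpow_of_nonneg _ _ hip0.le, ENNReal.mul_rpow_of_nonneg _ _ hip0.le,
          ← ENNReal.rpow_mul, mul_one_div_cancel hp0.ne', ENNReal.rpow_one,
          ENNReal.inv_rpow, ← ENNReal.rpow_neg]
    _ = ENNReal.ofReal (C * c ^ (-(1 / p))) * (∫⁻ y in K, ((‖F y‖₊ : ℝ≥0∞)) ^ p) ^ (1 / p) := by
        rw [hconst]
end
end
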